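/- There exists a constant c < ∞ such that for all integers n ≥ 1 and all z ∈ 𝕃 with |z| < n: E^z[|S_{τ_n}|] ≤ n + c·n^{2/3}, and E^z[log|S_{τ_n}|] − log n ≤ c·n^{−1/3}. -/

import Mathlib

open MeasureTheory

noncomputable section

/-- The lattice `𝕃`, the additive subgroup of `ℂ` generated by `1` and `z*`,
i.e. `{j + k z* : j, k ∈ ℤ}`. -/
def lat (zs : ℂ) : AddSubgroup ℂ := AddSubgroup.closure {1, zs}

/-- A mean-zero, isotropic random walk with finite `(3+δ)`-moment on the lattice
`lat zstar`, realized on the canonical space `ℕ → ℂ` of its i.i.d. increments. -/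
structure LatticeWalk where
  /-- the generator `z* ∈ ℂ ∖ ℝ` of the lattice -/
  zstar : ℂ
  zstar_not_real : zstar.im ≠ 0
  /-- the step probability mass function -/
  p : ℂ → ℝ
  p_nonneg : ∀ z, 0 ≤ p z
  p_sum : ∑' z : ℂ, p z = 1
  /-- the support of `p` generates the lattice -/
  p_gen : AddSubgroup.closure {z : ℂ | p z ≠ 0} = lat zstar
  δ : ℝ
  δ_pos : 0 < δ
  σ2 : ℝ
  σ2_pos : 0 < σ2
  mean_zero : ∑' z : ℂ, p z • z = 0
  var_re : ∑' z : ℂ, z.re ^ 2 * p z = σ2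
  var_im : ∑' z : ℂ, z.im ^ 2 * p z = σ2
  cov_zero : ∑' z : ℂ, z.re * z.im * p z = 0
  moment : Summable fun z : ℂ => ‖z‖ ^ (3 + δ) * p z
  /-- the law of the i.i.d. sequence of increments -/
  μ : Measure (ℕ → ℂ)
  prob : IsProbabilityMeasure μ
  indep : ProbabilityTheory.iIndepFun
    (fun n (ω : ℕ → ℂ) => ω n) μ
  dist : ∀ n z, μ {ω | ω n = z} = ENNReal.ofReal (p z)

/-- `T_B = inf{l ≥ 1 : s_l ∈ B}`, valued in `ℕ∞` (`= ∞` if `B` is never hit). -/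
def hitT (s : ℕ → ℂ) (B : Set ℂ) : ℕ∞ :=
  sInf {t : ℕ∞ | ∃ m : ℕ, t = m ∧ 1 ≤ m ∧ s m ∈ B}

/-- `T_B^0 = inf{l ≥ 0 : s_l ∈ B}`, valued in `ℕ∞` (`= ∞` if `B` is never hit). -/
def hitT0 (s : ℕ → ℂ) (B : Set ℂ) : ℕ∞ :=
  sInf {t : ℕ∞ | ∃ m : ℕ, t = m ∧ s m ∈ B}

/-- The position `s_t` of the path at an `ℕ∞`-valued time (junk value `s 0` if `t = ∞`). -/
def stopVal (s : ℕ → ℂ) (t : ℕ∞) : ℂ := s t.toNat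

/-- The random walk path started at `x` built from the increments `ω`:
`S_n = x + X_1 + ⋯ + X_n`. -/
def walkPath (x : ℂ) (ω : ℕ → ℂ) : ℕ → ℂ := fun n => x + ∑ i ∈ Finset.range n, ω i

namespace LatticeWalk

variable (W : LatticeWalk)

/-- `P^x(E)`, for an event `E` about the path `(S_n)_{n ≥ 0}` with `S_0 = x`. -/
def Pr (x : ℂ) (E : Set (ℕ → ℂ)) : ℝ := (W.μ {ω | walkPath x ω ∈ E}).toReal

/-- `E^x[f(S)]`. -/
def Ex (x : ℂ) (f : (ℕ → ℂ) → ℝ) : ℝ := ∫ ω, f (walkPath x ω) ∂W.μ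

/-- The law of the increments of the reversed walk, i.e. of the i.i.d. sequence with step
mass function `p_*(z) = p(-z)`. -/
def μstar : Measure (ℕ → ℂ) := W.μ.map fun ω n => -(ω n)

/-- `P_*^x(E)`, probability under the reversed step distribution. -/
def PrStar (x : ℂ) (E : Set (ℕ → ℂ)) : ℝ := (W.μstar {ω | walkPath x ω ∈ E}).toReal

/-- The discrete disk `𝒞_r = {z ∈ 𝕃 : |z| < r}`. -/
def disk (r : ℝ) : Set ℂ := {z | z ∈ lat W.zstar ∧ ‖z‖ < r}

/-- `τ_r = T^0_{𝒞_r^c}`, the exit time from `𝒞_r`. -/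
def exitTime (r : ℝ) (s : ℕ → ℂ) : ℕ∞ := hitT0 s (W.disk r)ᶜ

/-- The discrete strip `ℒ_r = {z ∈ 𝕃 : |Im z| < r}`. -/
def strip (r : ℝ) : Set ℂ := {z | z ∈ lat W.zstar ∧ |z.im| < r}

/-- `ρ_r = T^0_{ℒ_r^c}`, the exit time from `ℒ_r`. -/
def stripExit (r : ℝ) (s : ℕ → ℂ) : ℕ∞ := hitT0 s (W.strip r)ᶜ

/-- The Green's function `G_B(w,z) = Σ_{j=0}^{T^0_{B^c}-1} P^w(S_j = z)`. -/
def green (B : Set ℂ) (w z : ℂ) : ℝ :=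
  (∑' j : ℕ, W.μ {ω | walkPath w ω j = z ∧ (j : ℕ∞) < hitT0 (walkPath w ω) Bᶜ}).toReal

/-- `G_n = G_{𝒞_n}`. -/
def greenDisk (r : ℝ) (w z : ℂ) : ℝ := W.green (W.disk r) w z

/-- A set `A ⊆ 𝕃` is `(1/κ)`-dense (about the origin) if it meets every annulus
`{jκ ≤ |z| < (j+1)κ}`. -/
def IsKDense (κ : ℕ) (A : Set ℂ) : Prop :=
  A ⊆ lat W.zstar ∧
    ∀ j : ℕ, ∃ z ∈ A, (j * κ : ℝ) ≤ ‖z‖ ∧ ‖z‖ < ((j : ℝ) + 1) * κ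

/-- A minimal `(1/κ)`-dense set: `A = {w_j : j ∈ κℕ}` with `j ≤ |w_j| < j + κ`. -/
def IsMinimalKDense (κ : ℕ) (A : Set ℂ) : Prop :=
  ∃ w : ℕ → ℂ, A = w '' {j : ℕ | κ ∣ j} ∧
    ∀ j : ℕ, κ ∣ j → w j ∈ lat W.zstar ∧ (j : ℝ) ≤ ‖w j‖ ∧
      ‖w j‖ < (j : ℝ) + κ

end LatticeWalk

/-- `A[a,b] = A ∩ (𝒞_b ∖ 𝒞_a) = {z ∈ A : a ≤ |z| < b}` (for `A ⊆ 𝕃`). -/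
def slab (A : Set ℂ) (a b : ℝ) : Set ℂ := {z ∈ A | a ≤ ‖z‖ ∧ ‖z‖ < b}

/-- `κℕ = {κ m : m ∈ ℕ}`, viewed on the real axis of `ℂ`. -/
def kNat (κ : ℕ) : Set ℂ := {z | ∃ m : ℕ, z = (κ : ℂ) * m}

/-- `κℤ`, viewed on the real axis of `ℂ`. -/
def kInt (κ : ℕ) : Set ℂ := {z | ∃ m : ℤ, z = (κ : ℂ) * m}

/-- `κℤ⁺ = {κ m : m > 0}`, viewed on the real axis of `ℂ`. -/
def kIntPos (κ : ℕ) : Set ℂ := {z | ∃ m : ℤ, 0 < m ∧ z = (κ : ℂ) * m}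

/-- `κℤ⁻ = {κ m : m < 0}`, viewed on the real axis of `ℂ`. -/
def kIntNeg (κ : ℕ) : Set ℂ := {z | ∃ m : ℤ, m < 0 ∧ z = (κ : ℂ) * m}

/-- `κ(ℤ ∖ ℤ⁺) = {κ m : m ≤ 0}`, viewed on the real axis of `ℂ`. -/
def kIntNonpos (κ : ℕ) : Set ℂ := {z | ∃ m : ℤ, m ≤ 0 ∧ z = (κ : ℂ) * m}

/-- `κ(a + ℕ) = {κ(a + m) : m ∈ ℕ}`, viewed on the real axis of `ℂ`. -/
def kShift (κ : ℕ) (a : ℤ) : Set ℂ := {z | ∃ m : ℕ, z = (κ : ℂ) * ((a : ℂ) + m)}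

/-- `[a,b]_κ = κℤ ∩ [a, b)`, viewed on the real axis of `ℂ`. -/
def kRange (κ : ℕ) (a b : ℤ) : Set ℂ :=
  {z | ∃ m : ℤ, z = (κ : ℂ) * m ∧ a ≤ κ * m ∧ (κ : ℤ) * m < b}

namespace Ov

open scoped ENNReal
open ProbabilityTheory

variable (W : LatticeWalk)

lemma prob_inst : IsProbabilityMeasure W.μ := W.prob

lemma summable_p : Summable W.p := by
  by_contra h
  have := tsum_eq_zero_of_not_summable h
  rw [W.p_sum] at this
  norm_num at this

/-- the law of a single step -/
def stepLaw : Measure ℂ :=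
  Measure.sum (fun z : ℂ => ENNReal.ofReal (W.p z) • Measure.dirac z)

lemma F_def (t : Set ℂ) (ht : MeasurableSet t) :
    stepLaw W t = ∑' z : ℂ, t.indicator (fun z => ENNReal.ofReal (W.p z)) z := by
  rw [stepLaw, Measure.sum_apply _ ht]
  congr 1
  ext z
  rw [Measure.smul_apply, Measure.dirac_apply' _ ht]
  by_cases hz : z ∈ t <;> simp [hz]

lemma F_univ : ∑' z : ℂ, ENNReal.ofReal (W.p z) = 1 := by
  rw [← ENNReal.ofReal_tsum_of_nonneg W.p_nonneg (summable_p W), W.p_sum]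
  simp

lemma map_eval (k : ℕ) : W.μ.map (fun ω => ω k) = stepLaw W := by
  have hmeas : Measurable (fun ω : ℕ → ℂ => ω k) := measurable_pi_apply k
  haveI := prob_inst W
  have hsing : ∀ w : ℂ, W.μ.map (fun ω => ω k) {w} = ENNReal.ofReal (W.p w) := by
    intro w
    rw [Measure.map_apply hmeas (measurableSet_singleton w)]
    have : (fun ω : ℕ → ℂ => ω k) ⁻¹' {w} = {ω | ω k = w} := rfl
    rw [this, W.dist k w]
  -- key lower bound
  have key : ∀ t : Set ℂ, MeasurableSet t →
      (∑' z : ℂ, t.indicator (fun z => ENNReal.ofReal (W.p z)) z) ≤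
        W.μ.map (fun ω => ω k) t := by
    intro t ht
    set spt := Function.support W.p with hspt
    have hcnt : spt.Countable := (summable_p W).countable_support
    have hcnt' : (t ∩ spt).Countable := hcnt.mono Set.inter_subset_right
    have heq : ∀ z : ℂ, t.indicator (fun z => ENNReal.ofReal (W.p z)) z =
        (t ∩ spt).indicator (fun z => ENNReal.ofReal (W.p z)) z := by
      intro z
      by_cases h1 : z ∈ t
      · by_cases h2 : z ∈ spt
        · simp [h1, h2, Set.indicator_of_mem, Set.mem_inter_iff]
        · have hz : W.p z = 0 := Function.notMem_support.mp h2
          by_cases h3 : z ∈ t ∩ spt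
          · exact absurd h3.2 h2
          · simp [h1, h3, hz]
      · have h3 : z ∉ t ∩ spt := fun h => h1 h.1
        simp [h1, h3]
    calc (∑' z : ℂ, t.indicator (fun z => ENNReal.ofReal (W.p z)) z)
        = ∑' z : ℂ, (t ∩ spt).indicator (fun z => ENNReal.ofReal (W.p z)) z := by
          exact tsum_congr heq
      _ = ∑' z : (t ∩ spt : Set ℂ), ENNReal.ofReal (W.p z) := (tsum_subtype _ _).symm
      _ = ∑' z : (t ∩ spt : Set ℂ), W.μ.map (fun ω => ω k) {(z : ℂ)} := by
          exact tsum_congr fun z => (hsing z).symm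
      _ = W.μ.map (fun ω => ω k) (⋃ z ∈ (t ∩ spt), {z}) := by
          rw [measure_biUnion hcnt' _ (fun z _ => measurableSet_singleton z)]
          intro x hx y hy hxy
          simp only [Function.onFun]
          exact Set.disjoint_singleton.mpr hxy
      _ ≤ W.μ.map (fun ω => ω k) t := by
          apply measure_mono
          intro x hx
          simp only [Set.mem_iUnion] at hx
          obtain ⟨z, hz, hxz⟩ := hx
          rw [Set.mem_singleton_iff] at hxz
          subst hxz
          exact hz.1
  haveI : IsProbabilityMeasure (W.μ.map (fun ω => ω k)) :=
    Measure.isProbabilityMeasure_map hmeas.aemeasurable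
  ext t ht
  rw [F_def W t ht]
  refine le_antisymm ?_ (key t ht)
  have h1 : W.μ.map (fun ω => ω k) t + W.μ.map (fun ω => ω k) tᶜ = 1 := by
    rw [measure_add_measure_compl ht]; simp
  have h2 : (∑' z : ℂ, t.indicator (fun z => ENNReal.ofReal (W.p z)) z) +
      (∑' z : ℂ, tᶜ.indicator (fun z => ENNReal.ofReal (W.p z)) z) = 1 := by
    rw [← ENNReal.tsum_add, ← F_univ W]
    refine tsum_congr fun z => ?_
    by_cases hz : z ∈ t <;> simp [hz]
  have h3 := key tᶜ ht.compl
  have hfin : W.μ.map (fun ω => ω k) t ≠ ⊤ := measure_ne_top _ _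
  have hfin2 : (∑' z : ℂ, tᶜ.indicator (fun z => ENNReal.ofReal (W.p z)) z) ≠ ⊤ := by
    intro hcon; rw [hcon] at h2; simp at h2
  -- a + b = 1, c + d = 1, c ≤ a, d ≤ b ⇒ a ≤ c
  have h4 : W.μ.map (fun ω => ω k) t +
      (∑' z : ℂ, tᶜ.indicator (fun z => ENNReal.ofReal (W.p z)) z) ≤
      W.μ.map (fun ω => ω k) t + W.μ.map (fun ω => ω k) tᶜ :=
    add_le_add le_rfl h3
  rw [h1, ← h2] at h4
  exact (ENNReal.add_le_add_iff_right hfin2).mp h4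

end Ov
namespace Ov

open scoped ENNReal
open ProbabilityTheory

variable (W : LatticeWalk)

lemma lint_eval (k : ℕ) (f : ℂ → ℝ≥0∞) (hf : Measurable f) :
    ∫⁻ ω, f (ω k) ∂W.μ = ∑' z : ℂ, ENNReal.ofReal (W.p z) * f z := by
  rw [← lintegral_map hf (measurable_pi_apply k), map_eval W k, stepLaw,
    lintegral_sum_measure]
  refine tsum_congr fun z => ?_
  rw [lintegral_smul_measure, lintegral_dirac, smul_eq_mul]

lemma int_eval (k : ℕ) (f : ℂ → ℝ) (hf : Measurable f)
    (hsum : Summable (fun z => W.p z * |f z|)) :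
    Integrable (fun ω => f (ω k)) W.μ ∧
      ∫ ω, f (ω k) ∂W.μ = ∑' z : ℂ, W.p z * f z := by
  have hmeas : Measurable (fun ω : ℕ → ℂ => ω k) := measurable_pi_apply k
  have hlint : ∫⁻ ω, ‖f (ω k)‖₊ ∂W.μ ≠ ⊤ := by
    have : ∀ z : ℂ, ((‖f z‖₊ : ℝ≥0∞)) = ENNReal.ofReal |f z| := by
      intro z
      rw [← Real.norm_eq_abs, ofReal_norm_eq_enorm]; rfl
    calc ∫⁻ ω, (‖f (ω k)‖₊ : ℝ≥0∞) ∂W.μ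
        = ∑' z : ℂ, ENNReal.ofReal (W.p z) * (‖f z‖₊ : ℝ≥0∞) :=
          lint_eval W k (fun w => (‖f w‖₊ : ℝ≥0∞)) hf.enorm
      _ = ∑' z : ℂ, ENNReal.ofReal (W.p z * |f z|) := by
          refine tsum_congr fun z => ?_
          rw [this z, ← ENNReal.ofReal_mul (W.p_nonneg z)]
      _ = ENNReal.ofReal (∑' z : ℂ, W.p z * |f z|) :=
          (ENNReal.ofReal_tsum_of_nonneg
            (fun z => mul_nonneg (W.p_nonneg z) (abs_nonneg _)) hsum).symm
      _ ≠ ⊤ := ENNReal.ofReal_ne_top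
  have hint : Integrable (fun ω => f (ω k)) W.μ := by
    refine ⟨(hf.comp hmeas).aestronglyMeasurable, ?_⟩
    rw [HasFiniteIntegral]
    exact lt_of_le_of_ne le_top hlint
  refine ⟨hint, ?_⟩
  have hintmap : Integrable f (W.μ.map (fun ω => ω k)) :=
    (integrable_map_measure hf.aestronglyMeasurable hmeas.aemeasurable).mpr hint
  calc ∫ ω, f (ω k) ∂W.μ = ∫ w, f w ∂(W.μ.map (fun ω => ω k)) :=
        (integral_map hmeas.aemeasurable hf.aestronglyMeasurable).symm
    _ = ∫ w, f w ∂(stepLaw W) := by rw [map_eval W k]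
    _ = ∑' z : ℂ, ∫ w, f w ∂(ENNReal.ofReal (W.p z) • Measure.dirac z) := by
        rw [stepLaw, integral_sum_measure]
        rw [map_eval W k] at hintmap
        exact hintmap
    _ = ∑' z : ℂ, W.p z * f z := by
        refine tsum_congr fun z => ?_
        rw [integral_smul_measure, integral_dirac, ENNReal.toReal_ofReal (W.p_nonneg z)]
        simp [smul_eq_mul]

/-- generic weight comparison -/
lemma rpow_le_one_add (x : ℝ) (hx : 0 ≤ x) {e e' : ℝ} (h : e' ≤ e) (he' : 0 ≤ e') :
    x ^ e' ≤ 1 + x ^ e := by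
  rcases le_or_gt x 1 with h1 | h1
  · have := Real.rpow_le_one hx h1 he'
    have h2 : (0:ℝ) ≤ x ^ e := Real.rpow_nonneg hx e
    linarith
  · have := Real.rpow_le_rpow_of_exponent_le h1.le h
    have h2 : (0:ℝ) ≤ x ^ e' := Real.rpow_nonneg hx e'
    linarith

lemma summable_weight (f : ℂ → ℝ)
    (hbd : ∀ z : ℂ, |f z| ≤ 1 + ‖z‖ ^ (3 + W.δ)) :
    Summable (fun z => W.p z * |f z|) := by
  have : ∀ z : ℂ, W.p z * |f z| ≤ W.p z + ‖z‖ ^ (3 + W.δ) * W.p z := by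
    intro z
    have h1 := mul_le_mul_of_nonneg_left (hbd z) (W.p_nonneg z)
    calc W.p z * |f z| ≤ W.p z * (1 + ‖z‖ ^ (3 + W.δ)) := h1
      _ = W.p z + ‖z‖ ^ (3 + W.δ) * W.p z := by ring
  exact Summable.of_nonneg_of_le
    (fun z => mul_nonneg (W.p_nonneg z) (abs_nonneg _)) this
    ((summable_p W).add W.moment)

end Ov
namespace Ov

open scoped ENNReal
open ProbabilityTheory

variable (W : LatticeWalk)

lemma abs_le_weight (z : ℂ) : ‖z‖ ≤ 1 + ‖z‖ ^ (3 + W.δ) := by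
  have := rpow_le_one_add (‖z‖) (norm_nonneg z)
    (by linarith [W.δ_pos] : (1:ℝ) ≤ 3 + W.δ) zero_le_one
  rwa [Real.rpow_one] at this

lemma sq_abs_le_weight (z : ℂ) :
    ‖z‖ ^ (2:ℕ) ≤ 1 + ‖z‖ ^ (3 + W.δ) := by
  have := rpow_le_one_add (‖z‖) (norm_nonneg z)
    (by linarith [W.δ_pos] : (2:ℝ) ≤ 3 + W.δ) (by norm_num : (0:ℝ) ≤ 2)
  rwa [Real.rpow_two] at this

lemma summable_p_abs : Summable (fun z => W.p z * ‖z‖) := by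
  have := summable_weight W (fun z => ‖z‖) (fun z => by
    rw [abs_of_nonneg (norm_nonneg z)]; exact abs_le_weight W z)
  refine this.congr fun z => ?_
  rw [abs_of_nonneg (norm_nonneg z)]

lemma summable_smul : Summable (fun z : ℂ => W.p z • z) := by
  apply Summable.of_norm
  refine (summable_p_abs W).congr fun z => ?_
  rw [norm_smul, Real.norm_eq_abs, abs_of_nonneg (W.p_nonneg z)]

lemma mom_re : ∑' z : ℂ, W.p z * z.re = 0 := by
  have h := Complex.reCLM.map_tsum (summable_smul W)
  rw [W.mean_zero] at h
  simp only [map_zero] at h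
  calc ∑' z : ℂ, W.p z * z.re = ∑' z : ℂ, Complex.reCLM (W.p z • z) :=
        tsum_congr fun z => by simp [Complex.smul_re]
    _ = 0 := h.symm

lemma mom_im : ∑' z : ℂ, W.p z * z.im = 0 := by
  have h := Complex.imCLM.map_tsum (summable_smul W)
  rw [W.mean_zero] at h
  simp only [map_zero] at h
  calc ∑' z : ℂ, W.p z * z.im = ∑' z : ℂ, Complex.imCLM (W.p z • z) :=
        tsum_congr fun z => by simp [Complex.smul_im]
    _ = 0 := h.symm

lemma summable_re : Summable (fun z : ℂ => W.p z * |z.re|) :=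
  summable_weight W _ fun z => le_trans (Complex.abs_re_le_norm z) (abs_le_weight W z)

lemma summable_im : Summable (fun z : ℂ => W.p z * |z.im|) :=
  summable_weight W _ fun z => le_trans (Complex.abs_im_le_norm z) (abs_le_weight W z)

lemma normSq_le_weight (z : ℂ) :
    Complex.normSq z ≤ 1 + ‖z‖ ^ (3 + W.δ) := by
  rw [← Complex.sq_norm]
  exact sq_abs_le_weight W z

lemma summable_normSq : Summable (fun z => W.p z * |Complex.normSq z|) :=
  summable_weight W _ fun z => by
    rw [abs_of_nonneg (Complex.normSq_nonneg z)]
    exact normSq_le_weight W z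

lemma mom_normSq : ∑' z : ℂ, W.p z * Complex.normSq z = 2 * W.σ2 := by
  have hre : Summable (fun z : ℂ => z.re ^ 2 * W.p z) := by
    refine Summable.of_nonneg_of_le (fun z => mul_nonneg (sq_nonneg _) (W.p_nonneg z))
      (fun z => ?_) ((summable_p W).add W.moment)
    have h1 : z.re ^ 2 ≤ Complex.normSq z := by
      rw [Complex.normSq_apply]; nlinarith [sq_nonneg z.im]
    have h2 := normSq_le_weight W z
    calc z.re ^ 2 * W.p z ≤ (1 + ‖z‖ ^ (3 + W.δ)) * W.p z :=
          mul_le_mul_of_nonneg_right (h1.trans h2) (W.p_nonneg z)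
      _ = W.p z + ‖z‖ ^ (3 + W.δ) * W.p z := by ring
  have him : Summable (fun z : ℂ => z.im ^ 2 * W.p z) := by
    refine Summable.of_nonneg_of_le (fun z => mul_nonneg (sq_nonneg _) (W.p_nonneg z))
      (fun z => ?_) ((summable_p W).add W.moment)
    have h1 : z.im ^ 2 ≤ Complex.normSq z := by
      rw [Complex.normSq_apply]; nlinarith [sq_nonneg z.re]
    have h2 := normSq_le_weight W z
    calc z.im ^ 2 * W.p z ≤ (1 + ‖z‖ ^ (3 + W.δ)) * W.p z :=
          mul_le_mul_of_nonneg_right (h1.trans h2) (W.p_nonneg z)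
      _ = W.p z + ‖z‖ ^ (3 + W.δ) * W.p z := by ring
  calc ∑' z : ℂ, W.p z * Complex.normSq z
      = ∑' z : ℂ, (z.re ^ 2 * W.p z + z.im ^ 2 * W.p z) :=
        tsum_congr fun z => by rw [Complex.normSq_apply]; ring
    _ = W.σ2 + W.σ2 := by rw [Summable.tsum_add hre him, W.var_re, W.var_im]
    _ = 2 * W.σ2 := by ring

/-- the (3+δ)-moment constant, padded to be positive -/
def M3 : ℝ := (∑' z : ℂ, ‖z‖ ^ (3 + W.δ) * W.p z) + 1

lemma mom_sum_nonneg : 0 ≤ ∑' z : ℂ, ‖z‖ ^ (3 + W.δ) * W.p z :=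
  tsum_nonneg fun z => mul_nonneg (Real.rpow_nonneg (norm_nonneg z) _) (W.p_nonneg z)

lemma M3_pos : 0 < M3 W := by have := mom_sum_nonneg W; rw [M3]; linarith

lemma M3_one_le : 1 ≤ M3 W := by have := mom_sum_nonneg W; rw [M3]; linarith

/-- truncated first-moment tail -/
def β1 (a : ℝ) : ℝ := ∑' z : ℂ, W.p z * max (‖z‖ - a) 0

/-- truncated second-moment tail -/
def β2 (a : ℝ) : ℝ := ∑' z : ℂ, W.p z * max (‖z‖ - a) 0 ^ (2:ℕ)

lemma β1_nonneg (a : ℝ) : 0 ≤ β1 W a :=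
  tsum_nonneg fun z => mul_nonneg (W.p_nonneg z) (le_max_right _ _)

lemma β2_nonneg (a : ℝ) : 0 ≤ β2 W a :=
  tsum_nonneg fun z => mul_nonneg (W.p_nonneg z) (pow_nonneg (le_max_right _ _) _)

lemma β1_summable (a : ℝ) (ha : 0 ≤ a) :
    Summable (fun z : ℂ => W.p z * max (‖z‖ - a) 0) := by
  refine Summable.of_nonneg_of_le
    (fun z => mul_nonneg (W.p_nonneg z) (le_max_right _ _))
    (fun z => mul_le_mul_of_nonneg_left
      (max_le (by linarith [norm_nonneg z]) (norm_nonneg z)) (W.p_nonneg z))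
    (summable_p_abs W)

lemma β1_le (a : ℝ) (ha : 1 ≤ a) : β1 W a ≤ M3 W / a ^ ((2:ℝ) + W.δ) := by
  have hapos : (0:ℝ) < a := lt_of_lt_of_le one_pos ha
  have hae : (0:ℝ) < a ^ ((2:ℝ) + W.δ) := Real.rpow_pos_of_pos hapos _
  have hpt : ∀ z : ℂ, W.p z * max (‖z‖ - a) 0 ≤
      (‖z‖ ^ (3 + W.δ) * W.p z) / a ^ ((2:ℝ) + W.δ) := by
    intro z
    rcases le_or_gt (‖z‖) a with h | h
    · have hm : max (‖z‖ - a) 0 = 0 := max_eq_right (by linarith)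
      rw [hm, mul_zero]
      exact div_nonneg (mul_nonneg (Real.rpow_nonneg (norm_nonneg z) _)
        (W.p_nonneg z)) hae.le
    · have hz1 : (1:ℝ) ≤ ‖z‖ := le_trans ha h.le
      have hz0 : (0:ℝ) < ‖z‖ := lt_of_lt_of_le one_pos hz1
      have hmax : max (‖z‖ - a) 0 ≤ ‖z‖ :=
        max_le (by linarith) hz0.le
      rw [div_eq_mul_inv, mul_comm (‖z‖ ^ (3 + W.δ)) (W.p z), mul_assoc]
      refine mul_le_mul_of_nonneg_left ?_ (W.p_nonneg z)
      rw [← div_eq_mul_inv, le_div_iff₀ hae]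
      have hbase : a ^ ((2:ℝ) + W.δ) ≤ ‖z‖ ^ ((2:ℝ) + W.δ) :=
        Real.rpow_le_rpow hapos.le h.le (by linarith [W.δ_pos])
      calc max (‖z‖ - a) 0 * a ^ ((2:ℝ) + W.δ)
          ≤ ‖z‖ * ‖z‖ ^ ((2:ℝ) + W.δ) :=
            mul_le_mul hmax hbase hae.le hz0.le
        _ = ‖z‖ ^ (3 + W.δ) := by
            nth_rewrite 1 [← Real.rpow_one (‖z‖)]
            rw [← Real.rpow_add hz0]
            congr 1
            ring
  have hsumR : Summable (fun z : ℂ =>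
      (‖z‖ ^ (3 + W.δ) * W.p z) / a ^ ((2:ℝ) + W.δ)) := W.moment.div_const _
  have hsumL := β1_summable W a (by linarith)
  calc β1 W a ≤ ∑' z : ℂ, (‖z‖ ^ (3 + W.δ) * W.p z) / a ^ ((2:ℝ) + W.δ) :=
        Summable.tsum_le_tsum hpt hsumL hsumR
    _ = (∑' z : ℂ, ‖z‖ ^ (3 + W.δ) * W.p z) / a ^ ((2:ℝ) + W.δ) :=
        tsum_div_const
    _ ≤ M3 W / a ^ ((2:ℝ) + W.δ) := by
        have hM : (∑' z : ℂ, ‖z‖ ^ (3 + W.δ) * W.p z) ≤ M3 W := by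
          rw [M3]; linarith
        exact (div_le_div_iff_of_pos_right hae).mpr hM

lemma β2_summable (a : ℝ) (ha : 0 ≤ a) :
    Summable (fun z : ℂ => W.p z * max (‖z‖ - a) 0 ^ (2:ℕ)) := by
  refine Summable.of_nonneg_of_le
    (fun z => mul_nonneg (W.p_nonneg z) (pow_nonneg (le_max_right _ _) _))
    (fun z => ?_) (summable_normSq W)
  rw [abs_of_nonneg (Complex.normSq_nonneg z), ← Complex.sq_norm]
  refine mul_le_mul_of_nonneg_left ?_ (W.p_nonneg z)
  exact pow_le_pow_left₀ (le_max_right _ _)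
    (max_le (by linarith [norm_nonneg z]) (norm_nonneg z)) 2

lemma β2_le (a : ℝ) (ha : 1 ≤ a) : β2 W a ≤ M3 W / a ^ ((1:ℝ) + W.δ) := by
  have hapos : (0:ℝ) < a := lt_of_lt_of_le one_pos ha
  have hae : (0:ℝ) < a ^ ((1:ℝ) + W.δ) := Real.rpow_pos_of_pos hapos _
  have hpt : ∀ z : ℂ, W.p z * max (‖z‖ - a) 0 ^ (2:ℕ) ≤
      (‖z‖ ^ (3 + W.δ) * W.p z) / a ^ ((1:ℝ) + W.δ) := by
    intro z
    rcases le_or_gt (‖z‖) a with h | h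
    · have hm : max (‖z‖ - a) 0 = 0 := max_eq_right (by linarith)
      rw [hm]
      simp only [ne_eq, OfNat.ofNat_ne_zero, not_false_eq_true, zero_pow, mul_zero]
      exact div_nonneg (mul_nonneg (Real.rpow_nonneg (norm_nonneg z) _)
        (W.p_nonneg z)) hae.le
    · have hz1 : (1:ℝ) ≤ ‖z‖ := le_trans ha h.le
      have hz0 : (0:ℝ) < ‖z‖ := lt_of_lt_of_le one_pos hz1
      have hmax : max (‖z‖ - a) 0 ≤ ‖z‖ :=
        max_le (by linarith) hz0.le
      have hmax2 : max (‖z‖ - a) 0 ^ (2:ℕ) ≤ ‖z‖ ^ (2:ℕ) :=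
        pow_le_pow_left₀ (le_max_right _ _) hmax 2
      rw [div_eq_mul_inv, mul_comm (‖z‖ ^ (3 + W.δ)) (W.p z), mul_assoc]
      refine mul_le_mul_of_nonneg_left ?_ (W.p_nonneg z)
      rw [← div_eq_mul_inv, le_div_iff₀ hae]
      have hbase : a ^ ((1:ℝ) + W.δ) ≤ ‖z‖ ^ ((1:ℝ) + W.δ) :=
        Real.rpow_le_rpow hapos.le h.le (by linarith [W.δ_pos])
      calc max (‖z‖ - a) 0 ^ (2:ℕ) * a ^ ((1:ℝ) + W.δ)
          ≤ ‖z‖ ^ (2:ℕ) * ‖z‖ ^ ((1:ℝ) + W.δ) :=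
            mul_le_mul hmax2 hbase hae.le (by positivity)
        _ = ‖z‖ ^ (3 + W.δ) := by
            rw [← Real.rpow_natCast (‖z‖) 2, ← Real.rpow_add hz0]
            congr 1
            push_cast
            ring
  have hsumR : Summable (fun z : ℂ =>
      (‖z‖ ^ (3 + W.δ) * W.p z) / a ^ ((1:ℝ) + W.δ)) := W.moment.div_const _
  have hsumL := β2_summable W a (by linarith)
  calc β2 W a ≤ ∑' z : ℂ, (‖z‖ ^ (3 + W.δ) * W.p z) / a ^ ((1:ℝ) + W.δ) :=
        Summable.tsum_le_tsum hpt hsumL hsumR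
    _ = (∑' z : ℂ, ‖z‖ ^ (3 + W.δ) * W.p z) / a ^ ((1:ℝ) + W.δ) :=
        tsum_div_const
    _ ≤ M3 W / a ^ ((1:ℝ) + W.δ) := by
        have hM : (∑' z : ℂ, ‖z‖ ^ (3 + W.δ) * W.p z) ≤ M3 W := by
          rw [M3]; linarith
        exact (div_le_div_iff_of_pos_right hae).mpr hM

/-- the fixed truncation level used for the exit-time bound -/
def a0 : ℝ := max 1 ((2 * M3 W / W.σ2) ^ ((1/(1 + W.δ)) : ℝ))

lemma a0_one_le : 1 ≤ a0 W := le_max_left _ _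

lemma β2_a0 : β2 W (a0 W) ≤ W.σ2 / 2 := by
  have hδ := W.δ_pos
  have hσ := W.σ2_pos
  have hM := M3_pos W
  set x : ℝ := 2 * M3 W / W.σ2 with hx
  have hxpos : 0 < x := by rw [hx]; positivity
  have h1 : x ^ ((1/(1 + W.δ)) : ℝ) ≤ a0 W := le_max_right _ _
  have h2 : x ≤ a0 W ^ ((1:ℝ) + W.δ) := by
    have h3 : (x ^ ((1/(1 + W.δ)) : ℝ)) ^ ((1:ℝ) + W.δ) ≤ a0 W ^ ((1:ℝ) + W.δ) :=
      Real.rpow_le_rpow (Real.rpow_nonneg hxpos.le _) h1 (by linarith)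
    rwa [← Real.rpow_mul hxpos.le, one_div,
      inv_mul_cancel₀ (by linarith : (1:ℝ) + W.δ ≠ 0), Real.rpow_one] at h3
  have h4 := β2_le W (a0 W) (a0_one_le W)
  have hae : (0:ℝ) < a0 W ^ ((1:ℝ) + W.δ) :=
    Real.rpow_pos_of_pos (lt_of_lt_of_le one_pos (a0_one_le W)) _
  refine h4.trans ?_
  rw [div_le_div_iff₀ hae (by norm_num : (0:ℝ) < 2)]
  have h5 : W.σ2 * x ≤ W.σ2 * a0 W ^ ((1:ℝ) + W.δ) :=
    mul_le_mul_of_nonneg_left h2 hσ.le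
  have h6 : W.σ2 * x = 2 * M3 W := by
    rw [hx]; field_simp
  rw [h6] at h5
  linarith

end Ov
namespace Ov

open scoped ENNReal
open ProbabilityTheory

lemma lat_repr (zs : ℂ) {w : ℂ} (hw : w ∈ lat zs) :
    ∃ j k : ℤ, w = (j : ℂ) + (k : ℂ) * zs := by
  let T : AddSubgroup ℂ :=
    { carrier := {w : ℂ | ∃ j k : ℤ, w = (j : ℂ) + (k : ℂ) * zs}
      add_mem' := by
        rintro a b ⟨j1, k1, rfl⟩ ⟨j2, k2, rfl⟩
        exact ⟨j1 + j2, k1 + k2, by push_cast; ring⟩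
      zero_mem' := ⟨0, 0, by push_cast; ring⟩
      neg_mem' := by
        rintro a ⟨j, k, rfl⟩
        exact ⟨-j, -k, by push_cast; ring⟩ }
  have hsub : lat zs ≤ T := by
    rw [lat]
    apply AddSubgroup.closure_le T |>.mpr
    rintro x (rfl | rfl)
    · exact ⟨1, 0, by push_cast; ring⟩
    · exact ⟨0, 1, by push_cast; ring⟩
  exact hsub hw

lemma lat_countable (zs : ℂ) : Set.Countable (lat zs : Set ℂ) := by
  have : (lat zs : Set ℂ) ⊆ Set.range (fun jk : ℤ × ℤ => (jk.1 : ℂ) + (jk.2 : ℂ) * zs) := by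
    intro w hw
    obtain ⟨j, k, rfl⟩ := lat_repr zs hw
    exact ⟨(j, k), rfl⟩
  exact (Set.countable_range _).mono this

lemma meas_disk (W : LatticeWalk) (r : ℝ) : MeasurableSet (W.disk r) := by
  have : W.disk r ⊆ (lat W.zstar : Set ℂ) := fun w hw => hw.1
  exact Set.Countable.measurableSet ((lat_countable W.zstar).mono this)

lemma meas_walk (z : ℂ) (i : ℕ) : Measurable (fun ω : ℕ → ℂ => walkPath z ω i) := by
  unfold walkPath
  exact measurable_const.add (Finset.measurable_sum _ (fun j _ => measurable_pi_apply j))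

variable (W : LatticeWalk) (z : ℂ) (r : ℝ)

/-- `Bset k = {τ > k}`: the walk stays in the disk up to time `k`. -/
def Bset (k : ℕ) : Set (ℕ → ℂ) := {ω | ∀ i ≤ k, walkPath z ω i ∈ W.disk r}

/-- the stopped walk -/
def Yw : ℕ → (ℕ → ℂ) → ℂ
  | 0 => fun _ => z
  | (k+1) => fun ω => Yw k ω + (Bset W z r k).indicator (fun ω => ω k) ω

lemma meas_B (k : ℕ) : MeasurableSet (Bset W z r k) := by
  have : Bset W z r k = ⋂ (i : ℕ) (_ : i ≤ k), (fun ω => walkPath z ω i) ⁻¹' (W.disk r) := by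
    ext ω; simp [Bset, Set.mem_iInter]
  rw [this]
  exact MeasurableSet.iInter fun i => MeasurableSet.iInter fun _ =>
    (meas_walk z i) (meas_disk W r)

lemma B_antitone {j k : ℕ} (h : j ≤ k) : Bset W z r k ⊆ Bset W z r j :=
  fun ω hω i hi => hω i (hi.trans h)

lemma meas_Y (m : ℕ) : Measurable (Yw W z r m) := by
  induction m with
  | zero => exact measurable_const
  | succ k ih =>
    exact ih.add ((measurable_pi_apply k).indicator (meas_B W z r k))

lemma walk_congr {ω ω' : ℕ → ℂ} {m : ℕ} (h : ∀ i < m, ω i = ω' i) :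
    ∀ j ≤ m, walkPath z ω j = walkPath z ω' j := by
  intro j hj
  unfold walkPath
  congr 1
  refine Finset.sum_congr rfl fun i hi => ?_
  rw [Finset.mem_range] at hi
  exact h i (lt_of_lt_of_le hi hj)

lemma B_congr {ω ω' : ℕ → ℂ} {k : ℕ} (h : ∀ i < k, ω i = ω' i) :
    ω ∈ Bset W z r k ↔ ω' ∈ Bset W z r k := by
  constructor <;> intro hB i hi
  · rw [← walk_congr z h i hi]; exact hB i hi
  · rw [walk_congr z h i hi]; exact hB i hi

lemma Y_congr {ω ω' : ℕ → ℂ} {m : ℕ} (h : ∀ i < m, ω i = ω' i) :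
    Yw W z r m ω = Yw W z r m ω' := by
  induction m with
  | zero => rfl
  | succ k ih =>
    have h' : ∀ i < k, ω i = ω' i := fun i hi => h i (hi.trans (Nat.lt_succ_self k))
    show Yw W z r k ω + _ = Yw W z r k ω' + _
    rw [ih h']
    congr 1
    by_cases hB : ω ∈ Bset W z r k
    · have hB' : ω' ∈ Bset W z r k := (B_congr W z r h').mp hB
      rw [Set.indicator_of_mem hB, Set.indicator_of_mem hB']
      exact h k (Nat.lt_succ_self k)
    · have hB' : ω' ∉ Bset W z r k := fun hc => hB ((B_congr W z r h').mpr hc)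
      rw [Set.indicator_of_notMem hB, Set.indicator_of_notMem hB']

lemma walk_zero (ω : ℕ → ℂ) : walkPath z ω 0 = z := by simp [walkPath]

lemma walk_succ (ω : ℕ → ℂ) (m : ℕ) :
    walkPath z ω (m + 1) = walkPath z ω m + ω m := by
  unfold walkPath
  rw [Finset.sum_range_succ]
  ring

lemma Y_eq_walk {ω : ℕ → ℂ} {m : ℕ} (h : ∀ i < m, walkPath z ω i ∈ W.disk r) :
    Yw W z r m ω = walkPath z ω m := by
  induction m with
  | zero => rw [walk_zero]; rfl
  | succ k ih =>
    have h' : ∀ i < k, walkPath z ω i ∈ W.disk r :=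
      fun i hi => h i (hi.trans (Nat.lt_succ_self k))
    have hB : ω ∈ Bset W z r k := fun i hi => h i (Nat.lt_succ_of_le hi)
    show Yw W z r k ω + _ = _
    rw [ih h', Set.indicator_of_mem hB, walk_succ]

lemma Y_stall {ω : ℕ → ℂ} {t : ℕ} (h : ω ∉ Bset W z r t) :
    ∀ M, t ≤ M → Yw W z r M ω = Yw W z r t ω := by
  intro M hM
  induction M with
  | zero => cases Nat.le_zero.mp hM; rfl
  | succ k ih =>
    rcases Nat.lt_or_ge t (k+1) with h1 | h1
    · have ht : t ≤ k := Nat.lt_succ_iff.mp h1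
      have hnot : ω ∉ Bset W z r k := fun hc => h (B_antitone W z r ht hc)
      show Yw W z r k ω + _ = _
      rw [Set.indicator_of_notMem hnot, add_zero, ih ht]
    · have : t = k + 1 := le_antisymm hM h1
      subst this
      rfl

/-- independence of a first-`k`-coordinates functional from the `k`-th step -/
lemma indep_coord (k : ℕ) {β γ : Type} [MeasurableSpace β] [MeasurableSpace γ]
    (F : (ℕ → ℂ) → β) (hF : Measurable F)
    (hF' : ∀ ω ω' : ℕ → ℂ, (∀ i < k, ω i = ω' i) → F ω = F ω')
    (G : ℂ → γ) (hG : Measurable G) :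
    IndepFun F (fun ω => G (ω k)) W.μ := by
  classical
  have hdisj : Disjoint (Finset.range k) ({k} : Finset ℕ) := by
    simp [Finset.disjoint_singleton_right]
  have hind := W.indep.indepFun_finset (Finset.range k) {k} hdisj
    (fun i => measurable_pi_apply i)
  -- extension map
  let e : ({x // x ∈ Finset.range k} → ℂ) → (ℕ → ℂ) := fun x i =>
    if h : i ∈ Finset.range k then x ⟨i, h⟩ else 0
  have he : Measurable e := by
    apply measurable_pi_lambda
    intro i
    by_cases h : i ∈ Finset.range k
    · simp only [e, dif_pos h]
      exact measurable_pi_apply _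
    · simp only [e, dif_neg h]
      exact measurable_const
  have hFeq : F = (F ∘ e) ∘ (fun (ω : ℕ → ℂ) (i : {x // x ∈ Finset.range k}) => ω (i : ℕ)) := by
    funext ω
    refine (hF' _ _ fun i hi => ?_).symm
    simp only [e, Function.comp]
    rw [dif_pos (Finset.mem_range.mpr hi)]
  have hGeq : (fun ω : ℕ → ℂ => G (ω k)) =
      (fun x : {x // x ∈ ({k} : Finset ℕ)} → ℂ => G (x ⟨k, Finset.mem_singleton_self k⟩)) ∘
        (fun (ω : ℕ → ℂ) (i : {x // x ∈ ({k} : Finset ℕ)}) => ω (i : ℕ)) := by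
    funext ω; rfl
  rw [hFeq, hGeq]
  exact hind.comp (hF.comp he) (hG.comp (measurable_pi_apply _))

end Ov
namespace Ov

open scoped ENNReal
open ProbabilityTheory

variable (W : LatticeWalk) (z : ℂ) (r : ℝ)

/-- product with a function of the `k`-th coordinate: integrability and factorization -/
lemma cross_int (k : ℕ) (V : (ℕ → ℂ) → ℝ) (hVmeas : Measurable V)
    (hVdep : ∀ ω ω' : ℕ → ℂ, (∀ i < k, ω i = ω' i) → V ω = V ω')
    (hVint : Integrable V W.μ)
    (φ : ℂ → ℝ) (hφmeas : Measurable φ) (hφsum : Summable (fun z => W.p z * |φ z|)) :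
    Integrable (fun ω => V ω * φ (ω k)) W.μ ∧
      ∫ ω, V ω * φ (ω k) ∂W.μ = (∫ ω, V ω ∂W.μ) * (∑' w : ℂ, W.p w * φ w) := by
  have hI : IndepFun V (fun ω => φ (ω k)) W.μ :=
    indep_coord W k V hVmeas hVdep φ hφmeas
  obtain ⟨hφint, hφval⟩ := int_eval W k φ hφmeas hφsum
  have hmul : Integrable (fun ω => V ω * φ (ω k)) W.μ := hI.integrable_mul hVint hφint
  refine ⟨hmul, ?_⟩
  have := hI.integral_fun_mul_eq_mul_integral hVint.aestronglyMeasurable hφint.aestronglyMeasurable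
  rw [← hφval]
  exact this

section Martingale

variable (M : ℕ)

/-- the increment contribution to the stopped second moment -/
def termSq (a : ℝ) (m : ℕ) : (ℕ → ℂ) → ℝ := fun ω =>
  (Bset W z r m).indicator (fun ω' => max (‖ω' m‖ - a) 0 ^ (2:ℕ)) ω

lemma termSq_nonneg (a : ℝ) (m : ℕ) (ω : ℕ → ℂ) : 0 ≤ termSq W z r a m ω := by
  unfold termSq
  by_cases h : ω ∈ Bset W z r m
  · rw [Set.indicator_of_mem h]; positivity
  · rw [Set.indicator_of_notMem h]

lemma termSq_eq (a : ℝ) (m : ℕ) (ω : ℕ → ℂ) :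
    termSq W z r a m ω =
      (Bset W z r m).indicator (fun _ => (1:ℝ)) ω * max (‖ω m‖ - a) 0 ^ (2:ℕ) := by
  unfold termSq
  by_cases h : ω ∈ Bset W z r m
  · rw [Set.indicator_of_mem h, Set.indicator_of_mem h, one_mul]
  · rw [Set.indicator_of_notMem h, Set.indicator_of_notMem h, zero_mul]

lemma indB_meas (m : ℕ) :
    Measurable (fun ω => (Bset W z r m).indicator (fun _ => (1:ℝ)) ω) :=
  measurable_const.indicator (meas_B W z r m)

lemma indB_dep (m : ℕ) (ω ω' : ℕ → ℂ) (h : ∀ i < m, ω i = ω' i) :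
    (Bset W z r m).indicator (fun _ => (1:ℝ)) ω =
      (Bset W z r m).indicator (fun _ => (1:ℝ)) ω' := by
  by_cases hB : ω ∈ Bset W z r m
  · rw [Set.indicator_of_mem hB, Set.indicator_of_mem ((B_congr W z r h).mp hB)]
  · rw [Set.indicator_of_notMem hB,
      Set.indicator_of_notMem (fun hc => hB ((B_congr W z r h).mpr hc))]

lemma indB_int (m : ℕ) :
    Integrable (fun ω => (Bset W z r m).indicator (fun _ => (1:ℝ)) ω) W.μ := by
  haveI := prob_inst W
  refine Integrable.mono' (integrable_const 1) ((indB_meas W z r m).aestronglyMeasurable) ?_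
  refine Filter.Eventually.of_forall fun ω => ?_
  by_cases hB : ω ∈ Bset W z r m
  · rw [Set.indicator_of_mem hB]; simp
  · rw [Set.indicator_of_notMem hB]; simp

lemma indB_integral (m : ℕ) :
    ∫ ω, (Bset W z r m).indicator (fun _ => (1:ℝ)) ω ∂W.μ =
      (W.μ (Bset W z r m)).toReal := by
  have : (fun ω => (Bset W z r m).indicator (fun _ => (1:ℝ)) ω) =
      (Bset W z r m).indicator (1 : (ℕ → ℂ) → ℝ) := rfl
  rw [this, MeasureTheory.integral_indicator_one (meas_B W z r m)]; rfl

lemma phi2_meas (a : ℝ) : Measurable (fun w : ℂ => max (‖w‖ - a) 0 ^ (2:ℕ)) :=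
  (((continuous_norm.sub continuous_const).max continuous_const).pow 2).measurable

lemma phi2_sum (a : ℝ) (ha : 0 ≤ a) :
    Summable (fun w : ℂ => W.p w * |max (‖w‖ - a) 0 ^ (2:ℕ)|) := by
  refine (β2_summable W a ha).congr fun w => ?_
  rw [abs_of_nonneg (pow_nonneg (le_max_right _ _) _)]

lemma termSq_int (a : ℝ) (ha : 0 ≤ a) (m : ℕ) :
    Integrable (termSq W z r a m) W.μ ∧
      ∫ ω, termSq W z r a m ω ∂W.μ = (W.μ (Bset W z r m)).toReal * β2 W a := by
  have h := cross_int W m (fun ω => (Bset W z r m).indicator (fun _ => (1:ℝ)) ω)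
    (indB_meas W z r m) (indB_dep W z r m) (indB_int W z r m)
    (fun w => max (‖w‖ - a) 0 ^ (2:ℕ)) (phi2_meas a) (phi2_sum W a ha)
  have heq : (fun ω => (Bset W z r m).indicator (fun _ => (1:ℝ)) ω *
      max (‖ω m‖ - a) 0 ^ (2:ℕ)) = termSq W z r a m := by
    funext ω
    rw [termSq_eq]
  rw [heq] at h
  refine ⟨h.1, ?_⟩
  rw [h.2, indB_integral W z r m]
  rfl

/-- the stopped second-moment identity (optional stopping) -/
lemma v_ident (M : ℕ) :
    Integrable (fun ω => Complex.normSq (Yw W z r M ω)) W.μ ∧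
      ∫ ω, Complex.normSq (Yw W z r M ω) ∂W.μ =
        Complex.normSq z +
          (2 * W.σ2) * ∑ m ∈ Finset.range M, (W.μ (Bset W z r m)).toReal := by
  haveI := prob_inst W
  induction M with
  | zero =>
    constructor
    · show Integrable (fun _ : ℕ → ℂ => Complex.normSq z) W.μ
      exact integrable_const _
    · simp [Yw]
  | succ k ih =>
    obtain ⟨ih_int, ih_val⟩ := ih
    set V1 : (ℕ → ℂ) → ℝ :=
      fun ω => (Bset W z r k).indicator (fun ω' => (Yw W z r k ω').re) ω with hV1
    set V2 : (ℕ → ℂ) → ℝ :=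
      fun ω => (Bset W z r k).indicator (fun ω' => (Yw W z r k ω').im) ω with hV2
    set V3 : (ℕ → ℂ) → ℝ :=
      fun ω => (Bset W z r k).indicator (fun _ => (1:ℝ)) ω with hV3
    have hV1meas : Measurable V1 :=
      (Complex.measurable_re.comp (meas_Y W z r k)).indicator (meas_B W z r k)
    have hV2meas : Measurable V2 :=
      (Complex.measurable_im.comp (meas_Y W z r k)).indicator (meas_B W z r k)
    have hdep : ∀ (f : ℂ → ℝ) (ω ω' : ℕ → ℂ), (∀ i < k, ω i = ω' i) →
        (Bset W z r k).indicator (fun ω'' => f (Yw W z r k ω'')) ω =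
          (Bset W z r k).indicator (fun ω'' => f (Yw W z r k ω'')) ω' := by
      intro f ω ω' h
      by_cases hB : ω ∈ Bset W z r k
      · rw [Set.indicator_of_mem hB, Set.indicator_of_mem ((B_congr W z r h).mp hB),
          Y_congr W z r h]
      · rw [Set.indicator_of_notMem hB,
          Set.indicator_of_notMem (fun hc => hB ((B_congr W z r h).mpr hc))]
    have habs_le : ∀ w : ℂ, |w.re| ≤ 1 + Complex.normSq w ∧ |w.im| ≤ 1 + Complex.normSq w := by
      intro w
      have h1 : w.re ^ 2 ≤ Complex.normSq w := by
        rw [Complex.normSq_apply]; nlinarith [sq_nonneg w.im]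
      have h2 : w.im ^ 2 ≤ Complex.normSq w := by
        rw [Complex.normSq_apply]; nlinarith [sq_nonneg w.re]
      constructor <;> nlinarith [abs_nonneg w.re, abs_nonneg w.im, sq_abs w.re, sq_abs w.im]
    have hbnd : ∀ (f : ℂ → ℝ), (∀ w, |f w| ≤ 1 + Complex.normSq w) →
        ∀ ω, ‖(Bset W z r k).indicator (fun ω'' => f (Yw W z r k ω'')) ω‖ ≤
          1 + Complex.normSq (Yw W z r k ω) := by
      intro f hf ω
      rw [Real.norm_eq_abs]
      by_cases hB : ω ∈ Bset W z r k
      · rw [Set.indicator_of_mem hB]; exact hf _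
      · rw [Set.indicator_of_notMem hB]
        simp only [abs_zero]
        have := Complex.normSq_nonneg (Yw W z r k ω)
        linarith
    have hdom : Integrable (fun ω => 1 + Complex.normSq (Yw W z r k ω)) W.μ :=
      (integrable_const 1).add ih_int
    have hV1int : Integrable V1 W.μ :=
      Integrable.mono' hdom hV1meas.aestronglyMeasurable
        (Filter.Eventually.of_forall (hbnd _ fun w => (habs_le w).1))
    have hV2int : Integrable V2 W.μ :=
      Integrable.mono' hdom hV2meas.aestronglyMeasurable
        (Filter.Eventually.of_forall (hbnd _ fun w => (habs_le w).2))
    have hc1 := cross_int W k V1 hV1meas (hdep _) hV1int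
      (fun w => w.re) Complex.measurable_re (summable_re W)
    have hc2 := cross_int W k V2 hV2meas (hdep _) hV2int
      (fun w => w.im) Complex.measurable_im (summable_im W)
    have hc3 := cross_int W k V3 (indB_meas W z r k) (indB_dep W z r k) (indB_int W z r k)
      Complex.normSq Complex.continuous_normSq.measurable (summable_normSq W)
    have hexp : ∀ ω, Complex.normSq (Yw W z r (k+1) ω) =
        Complex.normSq (Yw W z r k ω) + (2 * (V1 ω * (ω k).re) +
          (2 * (V2 ω * (ω k).im) + V3 ω * Complex.normSq (ω k))) := by
      intro ω
      show Complex.normSq (Yw W z r k ω + (Bset W z r k).indicator (fun ω' => ω' k) ω) = _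
      by_cases hB : ω ∈ Bset W z r k
      · rw [Set.indicator_of_mem hB]
        simp only [hV1, hV2, hV3, Set.indicator_of_mem hB]
        rw [Complex.normSq_add]
        simp only [Complex.mul_re, Complex.conj_re, Complex.conj_im]
        ring
      · rw [Set.indicator_of_notMem hB]
        simp only [hV1, hV2, hV3, Set.indicator_of_notMem hB]
        rw [add_zero]
        ring
    have hfeq : (fun ω => Complex.normSq (Yw W z r (k+1) ω)) =
        (fun ω => Complex.normSq (Yw W z r k ω) + (2 * (V1 ω * (ω k).re) +
          (2 * (V2 ω * (ω k).im) + V3 ω * Complex.normSq (ω k)))) := funext hexp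
    have hint1 : Integrable (fun ω => 2 * (V1 ω * (ω k).re)) W.μ := hc1.1.const_mul 2
    have hint2 : Integrable (fun ω => 2 * (V2 ω * (ω k).im)) W.μ := hc2.1.const_mul 2
    have hint3 : Integrable (fun ω => V3 ω * Complex.normSq (ω k)) W.μ := hc3.1
    have hint_all : Integrable (fun ω => Complex.normSq (Yw W z r (k+1) ω)) W.μ := by
      rw [hfeq]
      exact ih_int.add (hint1.add (hint2.add hint3))
    refine ⟨hint_all, ?_⟩
    rw [hfeq]
    have hg23 : Integrable (fun ω => 2 * (V2 ω * (ω k).im) + V3 ω * Complex.normSq (ω k)) W.μ :=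
      hint2.add hint3
    have hg123 : Integrable (fun ω => 2 * (V1 ω * (ω k).re) +
        (2 * (V2 ω * (ω k).im) + V3 ω * Complex.normSq (ω k))) W.μ := hint1.add hg23
    rw [integral_add ih_int hg123, integral_add hint1 hg23, integral_add hint2 hint3]
    rw [integral_const_mul, integral_const_mul, hc1.2, hc2.2, hc3.2]
    rw [mom_re, mom_im, mom_normSq]
    have hV3val : ∫ ω, V3 ω ∂W.μ = (W.μ (Bset W z r k)).toReal := indB_integral W z r k
    rw [hV3val, ih_val, Finset.sum_range_succ]
    ring

end Martingale

end Ov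
namespace Ov

open scoped ENNReal
open ProbabilityTheory

variable (W : LatticeWalk) (z : ℂ) (r : ℝ)

lemma sum_termSq_nonneg (a : ℝ) (M : ℕ) (ω : ℕ → ℂ) :
    0 ≤ ∑ m ∈ Finset.range M, termSq W z r a m ω :=
  Finset.sum_nonneg fun m _ => termSq_nonneg W z r a m ω

lemma Y_le_aux {a : ℝ} (ha : 0 ≤ a) (hzr : ‖z‖ < r) {ω : ℕ → ℂ}
    (t M : ℕ) (htM : t ≤ M) (hmin : ∀ m < t, ω ∈ Bset W z r m) :
    ‖Yw W z r t ω‖ ≤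
      r + a + Real.sqrt (∑ m ∈ Finset.range M, termSq W z r a m ω) := by
  have hs := sum_termSq_nonneg W z r a M ω
  have hsq := Real.sqrt_nonneg (∑ m ∈ Finset.range M, termSq W z r a m ω)
  cases t with
  | zero =>
    show ‖z‖ ≤ _
    linarith
  | succ t' =>
    have hB : ω ∈ Bset W z r t' := hmin t' (Nat.lt_succ_self t')
    have hwalk : ∀ i < t' + 1, walkPath z ω i ∈ W.disk r := fun i hi =>
      hB i (Nat.lt_succ_iff.mp hi)
    rw [Y_eq_walk W z r hwalk, walk_succ]
    have h1 : ‖walkPath z ω t' + ω t'‖ ≤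
        ‖walkPath z ω t'‖ + ‖ω t'‖ := norm_add_le _ _
    have h2 : ‖walkPath z ω t'‖ < r := (hB t' le_rfl).2
    have h3 : ‖ω t'‖ ≤ a + max (‖ω t'‖ - a) 0 := by
      rcases le_or_gt (‖ω t'‖) a with h | h
      · have := le_max_right (‖ω t'‖ - a) 0
        linarith
      · rw [max_eq_left (by linarith)]
        linarith
    have h4 : max (‖ω t'‖ - a) 0 ≤
        Real.sqrt (∑ m ∈ Finset.range M, termSq W z r a m ω) := by
      have hterm : termSq W z r a t' ω = max (‖ω t'‖ - a) 0 ^ (2:ℕ) := by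
        unfold termSq
        rw [Set.indicator_of_mem hB]
      have hle : termSq W z r a t' ω ≤ ∑ m ∈ Finset.range M, termSq W z r a m ω :=
        Finset.single_le_sum (fun m _ => termSq_nonneg W z r a m ω)
          (Finset.mem_range.mpr (Nat.lt_of_lt_of_le (Nat.lt_succ_self t') htM))
      have := Real.sqrt_le_sqrt hle
      rwa [hterm, Real.sqrt_sq (le_max_right _ _)] at this
    linarith

lemma Y_le {a : ℝ} (ha : 0 ≤ a) (hzr : ‖z‖ < r) (M : ℕ) (ω : ℕ → ℂ) :
    ‖Yw W z r M ω‖ ≤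
      r + a + Real.sqrt (∑ m ∈ Finset.range M, termSq W z r a m ω) := by
  by_cases hall : ∀ m < M, ω ∈ Bset W z r m
  · exact Y_le_aux W z r ha hzr M M le_rfl hall
  · push_neg at hall
    have hex : ∃ m, m < M ∧ ω ∉ Bset W z r m := hall
    classical
    set t := Nat.find hex with ht
    obtain ⟨htM, htB⟩ := Nat.find_spec hex
    have hmin : ∀ m < t, ω ∈ Bset W z r m := by
      intro m hm
      by_contra hc
      exact Nat.find_min hex hm ⟨hm.trans htM, hc⟩
    rw [Y_stall W z r htB M htM.le]
    exact Y_le_aux W z r ha hzr t M htM.le hmin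

lemma nsq_Y_le {a : ℝ} (ha : 0 ≤ a) (hzr : ‖z‖ < r) (M : ℕ) (ω : ℕ → ℂ) :
    Complex.normSq (Yw W z r M ω) ≤
      2 * (r + a) ^ (2:ℕ) + 2 * ∑ m ∈ Finset.range M, termSq W z r a m ω := by
  have hs := sum_termSq_nonneg W z r a M ω
  have h1 := Y_le W z r ha hzr M ω
  have h0 := norm_nonneg (Yw W z r M ω)
  have hsqrt := Real.sqrt_nonneg (∑ m ∈ Finset.range M, termSq W z r a m ω)
  have hsq : Real.sqrt (∑ m ∈ Finset.range M, termSq W z r a m ω) ^ 2 =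
      ∑ m ∈ Finset.range M, termSq W z r a m ω := Real.sq_sqrt hs
  have hnsq : Complex.normSq (Yw W z r M ω) = ‖Yw W z r M ω‖ ^ 2 :=
    (Complex.sq_norm _).symm
  nlinarith [sq_nonneg (r + a - Real.sqrt (∑ m ∈ Finset.range M, termSq W z r a m ω))]

/-- the key exit-time bound: `∑_m P(τ > m) ≤ 2(r+a₀)²/σ²` -/
lemma sum_q_le (hzr : ‖z‖ < r) (M : ℕ) :
    ∑ m ∈ Finset.range M, (W.μ (Bset W z r m)).toReal ≤
      2 * (r + a0 W) ^ (2:ℕ) / W.σ2 := by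
  haveI := prob_inst W
  have ha0 : (0:ℝ) ≤ a0 W := le_trans zero_le_one (a0_one_le W)
  set Q := ∑ m ∈ Finset.range M, (W.μ (Bset W z r m)).toReal with hQ
  have hQnn : 0 ≤ Q :=
    Finset.sum_nonneg fun m _ => ENNReal.toReal_nonneg
  obtain ⟨hYint, hYval⟩ := v_ident W z r M
  -- integrate the pointwise bound
  have hterm_int : ∀ m, Integrable (termSq W z r (a0 W) m) W.μ :=
    fun m => (termSq_int W z r (a0 W) ha0 m).1
  have hRHSint : Integrable (fun ω =>
      2 * (r + a0 W) ^ (2:ℕ) + 2 * ∑ m ∈ Finset.range M, termSq W z r (a0 W) m ω) W.μ := by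
    refine (integrable_const _).add ?_
    exact (integrable_finset_sum _ (fun m _ => hterm_int m)).const_mul 2
  have hmono := integral_mono hYint hRHSint
    (fun ω => nsq_Y_le W z r ha0 hzr M ω)
  rw [hYval] at hmono
  have hRHSval : ∫ ω, (2 * (r + a0 W) ^ (2:ℕ) +
      2 * ∑ m ∈ Finset.range M, termSq W z r (a0 W) m ω) ∂W.μ =
      2 * (r + a0 W) ^ (2:ℕ) + 2 * (β2 W (a0 W) * Q) := by
    rw [integral_add (integrable_const _)
      ((integrable_finset_sum _ (fun m _ => hterm_int m)).const_mul 2)]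
    rw [integral_const]
    rw [integral_const_mul]
    rw [integral_finset_sum _ (fun m _ => hterm_int m)]
    have : ∑ m ∈ Finset.range M, ∫ ω, termSq W z r (a0 W) m ω ∂W.μ =
        β2 W (a0 W) * Q := by
      rw [hQ, Finset.mul_sum]
      refine Finset.sum_congr rfl fun m _ => ?_
      rw [(termSq_int W z r (a0 W) ha0 m).2]
      ring
    rw [this]
    simp
  rw [hRHSval] at hmono
  have hβ2 := β2_a0 W
  have hσ := W.σ2_pos
  have hnsq := Complex.normSq_nonneg z
  have hβ2Q : β2 W (a0 W) * Q ≤ (W.σ2 / 2) * Q :=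
    mul_le_mul_of_nonneg_right hβ2 hQnn
  rw [← hQ] at hmono
  rw [le_div_iff₀ hσ]
  linarith

end Ov
namespace Ov

open scoped ENNReal
open ProbabilityTheory

lemma hitT0_eq_top {s : ℕ → ℂ} {B : Set ℂ} (h : ∀ m : ℕ, s m ∉ B) :
    hitT0 s B = ⊤ := by
  rw [hitT0]
  rw [show {t : ℕ∞ | ∃ m : ℕ, t = m ∧ s m ∈ B} = ∅ from ?_, sInf_empty]
  ext t
  simp only [Set.mem_setOf_eq, Set.mem_empty_iff_false, iff_false]
  rintro ⟨m, rfl, hm⟩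
  exact h m hm

lemma hitT0_find {s : ℕ → ℂ} {B : Set ℂ} (h : ∃ m : ℕ, s m ∈ B) :
    ∃ m : ℕ, hitT0 s B = (m : ℕ∞) ∧ s m ∈ B ∧ ∀ i < m, s i ∉ B := by
  classical
  refine ⟨Nat.find h, ?_, Nat.find_spec h, fun i hi => Nat.find_min h hi⟩
  rw [hitT0]
  apply le_antisymm
  · exact sInf_le ⟨Nat.find h, rfl, Nat.find_spec h⟩
  · apply le_sInf
    rintro t ⟨m, rfl, hm⟩
    exact_mod_cast Nat.find_min' h hm

variable (W : LatticeWalk) (z : ℂ) (r : ℝ)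

/-- the stopped position (as a function on the sample space) -/
def fstop : (ℕ → ℂ) → ℂ := fun ω =>
  stopVal (walkPath z ω) (W.exitTime r (walkPath z ω))

lemma exit_cases (hz : z ∈ lat W.zstar) (hzr : ‖z‖ < r) (ω : ℕ → ℂ) :
    (fstop W z r ω = z ∧ ∀ m : ℕ, walkPath z ω m ∈ W.disk r) ∨
      ∃ m : ℕ, fstop W z r ω = walkPath z ω ((m : ℕ) + 1) ∧
        ω ∈ Bset W z r m ∧ walkPath z ω (m + 1) ∉ W.disk r := by
  by_cases h : ∃ m : ℕ, walkPath z ω m ∈ (W.disk r)ᶜ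
  · right
    obtain ⟨m, hm_eq, hm_mem, hm_min⟩ := hitT0_find h
    have hm_pos : m ≠ 0 := by
      intro h0
      subst h0
      rw [walk_zero] at hm_mem
      exact hm_mem ⟨hz, hzr⟩
    obtain ⟨m', rfl⟩ := Nat.exists_eq_succ_of_ne_zero hm_pos
    refine ⟨m', ?_, ?_, hm_mem⟩
    · have hcast : ((m'.succ : ℕ) : ℕ∞).toNat = m' + 1 := ENat.toNat_coe _
      rw [fstop, LatticeWalk.exitTime, hm_eq, stopVal, hcast]
    · intro i hi
      have := hm_min i (Nat.lt_succ_of_le hi)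
      simpa using this
  · left
    push_neg at h
    have h' : ∀ m : ℕ, walkPath z ω m ∈ W.disk r := by
      intro m
      have := h m
      simpa using this
    refine ⟨?_, h'⟩
    rw [fstop, LatticeWalk.exitTime, hitT0_eq_top h, stopVal]
    simp [walk_zero]

lemma meas_fstop : Measurable (fstop W z r) := by
  classical
  -- the preimage of any set is a countable union over the value of the exit time
  have hNdef : ∀ ω : ℕ → ℂ, fstop W z r ω =
      walkPath z ω ((W.exitTime r (walkPath z ω)).toNat) := fun ω => rfl
  set E : ℕ → Set (ℕ → ℂ) := fun m =>
    {ω | (W.exitTime r (walkPath z ω)).toNat = m} with hE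
  have hEmeas : ∀ m, MeasurableSet (E m) := by
    intro m
    have hchar : E m = (if m = 0 then
        ({ω | walkPath z ω 0 ∉ W.disk r} ∪ {ω | ∀ i : ℕ, walkPath z ω i ∈ W.disk r})
      else {ω | walkPath z ω m ∉ W.disk r ∧ ∀ i < m, walkPath z ω i ∈ W.disk r}) := by
      ext ω
      simp only [hE, Set.mem_setOf_eq]
      constructor
      · intro hm
        by_cases h : ∃ j : ℕ, walkPath z ω j ∈ (W.disk r)ᶜ
        · obtain ⟨j, hj_eq, hj_mem, hj_min⟩ := hitT0_find h
          rw [LatticeWalk.exitTime, hj_eq] at hm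
          simp only [ENat.toNat_coe] at hm
          subst hm
          rcases Nat.eq_zero_or_pos j with h0 | hpos
          · subst h0
            simp only [if_pos rfl]
            left
            exact hj_mem
          · rw [if_neg (Nat.pos_iff_ne_zero.mp hpos)]
            refine ⟨hj_mem, fun i hi => ?_⟩
            have := hj_min i hi
            simpa using this
        · push_neg at h
          have h' : ∀ i : ℕ, walkPath z ω i ∈ W.disk r := fun i => by simpa using h i
          rw [LatticeWalk.exitTime, hitT0_eq_top h] at hm
          simp only [ENat.toNat_top] at hm
          subst hm
          simp only [if_pos rfl]
          right
          exact h'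
      · intro hm
        by_cases hm0 : m = 0
        · subst hm0
          rw [if_pos rfl] at hm
          rcases hm with h1 | h2
          · have h : ∃ j : ℕ, walkPath z ω j ∈ (W.disk r)ᶜ := ⟨0, h1⟩
            obtain ⟨j, hj_eq, hj_mem, hj_min⟩ := hitT0_find h
            have hj0 : j = 0 := by
              by_contra hj0
              exact (hj_min 0 (Nat.pos_iff_ne_zero.mpr hj0)) h1
            rw [LatticeWalk.exitTime, hj_eq, hj0]
            rfl
          · have h : ∀ j : ℕ, walkPath z ω j ∉ (W.disk r)ᶜ := fun j => by
              simp only [Set.mem_compl_iff, not_not]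
              exact h2 j
            rw [LatticeWalk.exitTime, hitT0_eq_top h]
            rfl
        · rw [if_neg hm0] at hm
          have h : ∃ j : ℕ, walkPath z ω j ∈ (W.disk r)ᶜ := ⟨m, hm.1⟩
          obtain ⟨j, hj_eq, hj_mem, hj_min⟩ := hitT0_find h
          have hjm : j = m := by
            rcases lt_trichotomy j m with h1 | h1 | h1
            · exact absurd hj_mem (by simpa using hm.2 j h1)
            · exact h1
            · exact absurd (Set.mem_compl hm.1) (hj_min m h1)
          rw [LatticeWalk.exitTime, hj_eq, hjm]
          rfl
    rw [hchar]
    split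
    · refine MeasurableSet.union ?_ ?_
      · exact ((meas_walk z 0) (meas_disk W r)).compl
      · have hset : {ω : ℕ → ℂ | ∀ i : ℕ, walkPath z ω i ∈ W.disk r} =
            ⋂ i : ℕ, (fun ω => walkPath z ω i) ⁻¹' (W.disk r) := by
          ext ω; simp
        rw [hset]
        exact MeasurableSet.iInter fun i => (meas_walk z i) (meas_disk W r)
    · have hset : {ω : ℕ → ℂ | walkPath z ω m ∉ W.disk r ∧
          ∀ i < m, walkPath z ω i ∈ W.disk r} =
          ((fun ω => walkPath z ω m) ⁻¹' (W.disk r))ᶜ ∩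
            ⋂ (i : ℕ) (_ : i < m), (fun ω => walkPath z ω i) ⁻¹' (W.disk r) := by
        ext ω; simp
      rw [hset]
      exact (((meas_walk z m) (meas_disk W r)).compl).inter
        (MeasurableSet.iInter fun i => MeasurableSet.iInter fun _ =>
          (meas_walk z i) (meas_disk W r))
  intro t ht
  have hpre : fstop W z r ⁻¹' t =
      ⋃ m : ℕ, (E m ∩ (fun ω => walkPath z ω m) ⁻¹' t) := by
    ext ω
    simp only [Set.mem_preimage, Set.mem_iUnion, Set.mem_inter_iff, Set.mem_setOf_eq, hE]
    constructor
    · intro hω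
      exact ⟨(W.exitTime r (walkPath z ω)).toNat, rfl, by rwa [← hNdef]⟩
    · rintro ⟨m, hm, hmem⟩
      rw [hNdef ω, hm]
      exact hmem
  rw [hpre]
  exact MeasurableSet.iUnion fun m => (hEmeas m).inter ((meas_walk z m) ht)

/-- the overshoot contribution of the `m`-th step, `ℝ≥0∞`-valued -/
def termO (a : ℝ) (m : ℕ) : (ℕ → ℂ) → ℝ≥0∞ := fun ω =>
  (Bset W z r m).indicator (fun ω' => ENNReal.ofReal (max (‖ω' m‖ - a) 0)) ω

lemma dom_fstop {a : ℝ} (ha : 0 ≤ a) (hz : z ∈ lat W.zstar) (hzr : ‖z‖ < r)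
    (ω : ℕ → ℂ) :
    ENNReal.ofReal (‖(fstop W z r ω)‖) ≤
        ENNReal.ofReal (r + a) + ∑' m : ℕ, termO W z r a m ω ∧
      ENNReal.ofReal (max (‖(fstop W z r ω)‖ - r) 0) ≤
        ENNReal.ofReal a + ∑' m : ℕ, termO W z r a m ω := by
  have hr : (0:ℝ) ≤ r := le_trans (norm_nonneg z) hzr.le
  rcases exit_cases W z r hz hzr ω with ⟨heq, _⟩ | ⟨m, heq, hB, hout⟩
  · rw [heq]
    constructor
    · refine le_trans ?_ le_self_add
      exact ENNReal.ofReal_le_ofReal (by linarith)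
    · refine le_trans ?_ le_self_add
      refine ENNReal.ofReal_le_ofReal ?_
      exact le_trans (max_le (by linarith) ha) le_rfl
  · rw [heq, walk_succ]
    have h1 : ‖walkPath z ω m + ω m‖ ≤
        ‖walkPath z ω m‖ + ‖ω m‖ := norm_add_le _ _
    have h2 : ‖walkPath z ω m‖ < r := (hB m le_rfl).2
    have h3 : ‖ω m‖ ≤ a + max (‖ω m‖ - a) 0 := by
      rcases le_or_gt (‖ω m‖) a with h | h
      · have := le_max_right (‖ω m‖ - a) 0
        linarith
      · rw [max_eq_left (by linarith)]; linarith
    have hterm : termO W z r a m ω =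
        ENNReal.ofReal (max (‖ω m‖ - a) 0) := by
      rw [termO, Set.indicator_of_mem hB]
    have hle_tsum : termO W z r a m ω ≤ ∑' m' : ℕ, termO W z r a m' ω :=
      ENNReal.le_tsum m
    constructor
    · calc ENNReal.ofReal (‖walkPath z ω m + ω m‖)
          ≤ ENNReal.ofReal ((r + a) + max (‖ω m‖ - a) 0) :=
            ENNReal.ofReal_le_ofReal (by linarith)
        _ = ENNReal.ofReal (r + a) + ENNReal.ofReal (max (‖ω m‖ - a) 0) :=
            ENNReal.ofReal_add (by linarith) (le_max_right _ _)
        _ ≤ ENNReal.ofReal (r + a) + ∑' m' : ℕ, termO W z r a m' ω := by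
            rw [← hterm] at *
            exact add_le_add le_rfl hle_tsum
    · calc ENNReal.ofReal (max (‖walkPath z ω m + ω m‖ - r) 0)
          ≤ ENNReal.ofReal (a + max (‖ω m‖ - a) 0) := by
            refine ENNReal.ofReal_le_ofReal ?_
            refine max_le (by linarith) ?_
            have := le_max_right (‖ω m‖ - a) 0
            linarith
        _ = ENNReal.ofReal a + ENNReal.ofReal (max (‖ω m‖ - a) 0) :=
            ENNReal.ofReal_add ha (le_max_right _ _)
        _ ≤ ENNReal.ofReal a + ∑' m' : ℕ, termO W z r a m' ω := by
            rw [← hterm] at *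
            exact add_le_add le_rfl hle_tsum

lemma termO_meas (a : ℝ) (m : ℕ) : Measurable (termO W z r a m) := by
  refine Measurable.indicator ?_ (meas_B W z r m)
  refine Measurable.ennreal_ofReal ?_
  exact (((continuous_norm.sub continuous_const).max continuous_const).measurable).comp
    (measurable_pi_apply m)

lemma lint_termO (a : ℝ) (ha : 0 ≤ a) (m : ℕ) :
    ∫⁻ ω, termO W z r a m ω ∂W.μ = W.μ (Bset W z r m) * ENNReal.ofReal (β1 W a) := by
  have hptw : ∀ ω, termO W z r a m ω =
      ((Bset W z r m).indicator (1 : (ℕ → ℂ) → ℝ≥0∞) ω) *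
        ENNReal.ofReal (max (‖ω m‖ - a) 0) := by
    intro ω
    rw [termO]
    by_cases hB : ω ∈ Bset W z r m
    · rw [Set.indicator_of_mem hB, Set.indicator_of_mem hB, Pi.one_apply, one_mul]
    · rw [Set.indicator_of_notMem hB, Set.indicator_of_notMem hB, zero_mul]
  have hFmeas : Measurable ((Bset W z r m).indicator (1 : (ℕ → ℂ) → ℝ≥0∞)) :=
    measurable_one.indicator (meas_B W z r m)
  have hGmeas : Measurable (fun w : ℂ => ENNReal.ofReal (max (‖w‖ - a) 0)) :=
    Measurable.ennreal_ofReal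
      (((continuous_norm.sub continuous_const).max continuous_const).measurable)
  have hindep : IndepFun ((Bset W z r m).indicator (1 : (ℕ → ℂ) → ℝ≥0∞))
      (fun ω => ENNReal.ofReal (max (‖ω m‖ - a) 0)) W.μ := by
    refine indep_coord W m _ hFmeas ?_ _ hGmeas
    intro ω ω' h
    by_cases hB : ω ∈ Bset W z r m
    · rw [Set.indicator_of_mem hB, Set.indicator_of_mem ((B_congr W z r h).mp hB)]
      rfl
    · rw [Set.indicator_of_notMem hB,
        Set.indicator_of_notMem (fun hc => hB ((B_congr W z r h).mpr hc))]
  have hGmeas' : Measurable (fun ω : ℕ → ℂ =>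
      ENNReal.ofReal (max (‖ω m‖ - a) 0)) :=
    hGmeas.comp (measurable_pi_apply m)
  have hmul := lintegral_mul_eq_lintegral_mul_lintegral_of_indepFun hFmeas hGmeas' hindep
  have hL : ∫⁻ ω, termO W z r a m ω ∂W.μ =
      ∫⁻ ω, ((Bset W z r m).indicator (1 : (ℕ → ℂ) → ℝ≥0∞) *
        fun ω : ℕ → ℂ => ENNReal.ofReal (max (‖ω m‖ - a) 0)) ω ∂W.μ :=
    lintegral_congr fun ω => by rw [hptw ω]; rfl
  rw [hL, hmul, lintegral_indicator_one (meas_B W z r m)]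
  congr 1
  rw [lint_eval W m _ hGmeas]
  unfold β1
  rw [ENNReal.ofReal_tsum_of_nonneg
    (fun w => mul_nonneg (W.p_nonneg w) (le_max_right _ _)) (β1_summable W a ha)]
  exact tsum_congr fun w => (ENNReal.ofReal_mul (W.p_nonneg w)).symm

lemma lint_sum_termO (a : ℝ) (ha : 0 ≤ a) :
    ∫⁻ ω, ∑' m : ℕ, termO W z r a m ω ∂W.μ =
      (∑' m : ℕ, W.μ (Bset W z r m)) * ENNReal.ofReal (β1 W a) := by
  rw [lintegral_tsum (fun m => (termO_meas W z r a m).aemeasurable)]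
  rw [← ENNReal.tsum_mul_right]
  exact tsum_congr fun m => lint_termO W z r a ha m

lemma tsum_muB_le (hzr : ‖z‖ < r) :
    ∑' m : ℕ, W.μ (Bset W z r m) ≤
      ENNReal.ofReal (2 * (r + a0 W) ^ (2:ℕ) / W.σ2) := by
  refine ENNReal.tsum_le_of_sum_range_le fun M => ?_
  have h1 : ∑ m ∈ Finset.range M, W.μ (Bset W z r m) =
      ENNReal.ofReal (∑ m ∈ Finset.range M, (W.μ (Bset W z r m)).toReal) := by
    rw [ENNReal.ofReal_sum_of_nonneg (fun m _ => ENNReal.toReal_nonneg)]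
    refine Finset.sum_congr rfl fun m _ => ?_
    haveI := prob_inst W
    rw [ENNReal.ofReal_toReal (measure_ne_top _ _)]
  rw [h1]
  exact ENNReal.ofReal_le_ofReal (sum_q_le W z r hzr M)

end Ov
namespace Ov

open scoped ENNReal
open ProbabilityTheory

variable (W : LatticeWalk) (z : ℂ) (r : ℝ)

lemma lint_both {a : ℝ} (ha : 0 ≤ a) (hz : z ∈ lat W.zstar) (hzr : ‖z‖ < r) :
    (∫⁻ ω, ENNReal.ofReal (‖(fstop W z r ω)‖) ∂W.μ ≤
        ENNReal.ofReal ((r + a) + (2 * (r + a0 W) ^ (2:ℕ) / W.σ2) * β1 W a)) ∧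
      (∫⁻ ω, ENNReal.ofReal (max (‖(fstop W z r ω)‖ - r) 0) ∂W.μ ≤
        ENNReal.ofReal (a + (2 * (r + a0 W) ^ (2:ℕ) / W.σ2) * β1 W a)) := by
  haveI := prob_inst W
  have hr : (0:ℝ) ≤ r := le_trans (norm_nonneg z) hzr.le
  have hKq : (0:ℝ) ≤ 2 * (r + a0 W) ^ (2:ℕ) / W.σ2 := by
    have := W.σ2_pos
    have h0 : (0:ℝ) ≤ r + a0 W := by
      have := a0_one_le W; linarith
    positivity
  have hβ1 := β1_nonneg W a
  have hsum_bound : ∫⁻ ω, ∑' m : ℕ, termO W z r a m ω ∂W.μ ≤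
      ENNReal.ofReal ((2 * (r + a0 W) ^ (2:ℕ) / W.σ2) * β1 W a) := by
    rw [lint_sum_termO W z r a ha]
    calc (∑' m : ℕ, W.μ (Bset W z r m)) * ENNReal.ofReal (β1 W a)
        ≤ ENNReal.ofReal (2 * (r + a0 W) ^ (2:ℕ) / W.σ2) * ENNReal.ofReal (β1 W a) :=
          mul_le_mul_left (tsum_muB_le W z r hzr) _
      _ = ENNReal.ofReal ((2 * (r + a0 W) ^ (2:ℕ) / W.σ2) * β1 W a) :=
          (ENNReal.ofReal_mul hKq).symm
  have hsum_meas : Measurable (fun ω => ∑' m : ℕ, termO W z r a m ω) :=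
    Measurable.ennreal_tsum fun m => termO_meas W z r a m
  constructor
  · calc ∫⁻ ω, ENNReal.ofReal (‖(fstop W z r ω)‖) ∂W.μ
        ≤ ∫⁻ ω, (ENNReal.ofReal (r + a) + ∑' m : ℕ, termO W z r a m ω) ∂W.μ :=
          lintegral_mono fun ω => (dom_fstop W z r ha hz hzr ω).1
      _ = ENNReal.ofReal (r + a) + ∫⁻ ω, ∑' m : ℕ, termO W z r a m ω ∂W.μ := by
          rw [lintegral_add_left measurable_const, lintegral_const, measure_univ, mul_one]
      _ ≤ ENNReal.ofReal (r + a) +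
            ENNReal.ofReal ((2 * (r + a0 W) ^ (2:ℕ) / W.σ2) * β1 W a) :=
          add_le_add le_rfl hsum_bound
      _ = ENNReal.ofReal ((r + a) + (2 * (r + a0 W) ^ (2:ℕ) / W.σ2) * β1 W a) :=
          (ENNReal.ofReal_add (by linarith) (mul_nonneg hKq hβ1)).symm
  · calc ∫⁻ ω, ENNReal.ofReal (max (‖(fstop W z r ω)‖ - r) 0) ∂W.μ
        ≤ ∫⁻ ω, (ENNReal.ofReal a + ∑' m : ℕ, termO W z r a m ω) ∂W.μ :=
          lintegral_mono fun ω => (dom_fstop W z r ha hz hzr ω).2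
      _ = ENNReal.ofReal a + ∫⁻ ω, ∑' m : ℕ, termO W z r a m ω ∂W.μ := by
          rw [lintegral_add_left measurable_const, lintegral_const, measure_univ, mul_one]
      _ ≤ ENNReal.ofReal a +
            ENNReal.ofReal ((2 * (r + a0 W) ^ (2:ℕ) / W.σ2) * β1 W a) :=
          add_le_add le_rfl hsum_bound
      _ = ENNReal.ofReal (a + (2 * (r + a0 W) ^ (2:ℕ) / W.σ2) * β1 W a) :=
          (ENNReal.ofReal_add ha (mul_nonneg hKq hβ1)).symm

lemma int_fstop_le {a : ℝ} (ha : 0 ≤ a) (hz : z ∈ lat W.zstar) (hzr : ‖z‖ < r) :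
    ∫ ω, ‖(fstop W z r ω)‖ ∂W.μ ≤
      (r + a) + (2 * (r + a0 W) ^ (2:ℕ) / W.σ2) * β1 W a := by
  have hr : (0:ℝ) ≤ r := le_trans (norm_nonneg z) hzr.le
  have hKq : (0:ℝ) ≤ 2 * (r + a0 W) ^ (2:ℕ) / W.σ2 := by
    have := W.σ2_pos
    have h0 : (0:ℝ) ≤ r + a0 W := by
      have := a0_one_le W; linarith
    positivity
  have hβ1 := β1_nonneg W a
  rw [integral_eq_lintegral_of_nonneg_ae
    (Filter.Eventually.of_forall fun ω => norm_nonneg _)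
    ((continuous_norm.measurable.comp (meas_fstop W z r)).aestronglyMeasurable)]
  exact ENNReal.toReal_le_of_le_ofReal (by positivity) (lint_both W z r ha hz hzr).1

lemma gplus_facts {a : ℝ} (ha : 0 ≤ a) (hz : z ∈ lat W.zstar) (hzr : ‖z‖ < r) :
    Integrable (fun ω => max (‖(fstop W z r ω)‖ - r) 0) W.μ ∧
      ∫ ω, max (‖(fstop W z r ω)‖ - r) 0 ∂W.μ ≤
        a + (2 * (r + a0 W) ^ (2:ℕ) / W.σ2) * β1 W a := by
  have hr : (0:ℝ) ≤ r := le_trans (norm_nonneg z) hzr.le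
  have hKq : (0:ℝ) ≤ 2 * (r + a0 W) ^ (2:ℕ) / W.σ2 := by
    have := W.σ2_pos
    have h0 : (0:ℝ) ≤ r + a0 W := by
      have := a0_one_le W; linarith
    positivity
  have hβ1 := β1_nonneg W a
  have hmeas : Measurable (fun ω => max (‖(fstop W z r ω)‖ - r) 0) :=
    ((continuous_norm.measurable.comp (meas_fstop W z r)).sub measurable_const).max
      measurable_const
  have hfin : ∫⁻ ω, (‖max (‖(fstop W z r ω)‖ - r) 0‖₊ : ℝ≥0∞) ∂W.μ ≠ ⊤ := by
    have heq : ∀ ω : ℕ → ℂ, (‖max (‖(fstop W z r ω)‖ - r) 0‖₊ : ℝ≥0∞) =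
        ENNReal.ofReal (max (‖(fstop W z r ω)‖ - r) 0) := by
      intro ω
      rw [← enorm_eq_nnnorm, ← ofReal_norm_eq_enorm, Real.norm_eq_abs,
        abs_of_nonneg (le_max_right _ _)]
    refine ne_top_of_le_ne_top
      (ENNReal.ofReal_ne_top
        (r := a + (2 * (r + a0 W) ^ (2:ℕ) / W.σ2) * β1 W a)) ?_
    calc ∫⁻ ω, (‖max (‖(fstop W z r ω)‖ - r) 0‖₊ : ℝ≥0∞) ∂W.μ
        = ∫⁻ ω, ENNReal.ofReal (max (‖(fstop W z r ω)‖ - r) 0) ∂W.μ :=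
          lintegral_congr heq
      _ ≤ ENNReal.ofReal (a + (2 * (r + a0 W) ^ (2:ℕ) / W.σ2) * β1 W a) :=
          (lint_both W z r ha hz hzr).2
  have hint : Integrable (fun ω => max (‖(fstop W z r ω)‖ - r) 0) W.μ := by
    refine ⟨hmeas.aestronglyMeasurable, ?_⟩
    rw [HasFiniteIntegral]
    exact lt_of_le_of_ne le_top hfin
  refine ⟨hint, ?_⟩
  rw [integral_eq_lintegral_of_nonneg_ae
    (f := fun ω => max (‖(fstop W z r ω)‖ - r) 0)
    (Filter.Eventually.of_forall fun ω => le_max_right _ _) hmeas.aestronglyMeasurable]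
  exact ENNReal.toReal_le_of_le_ofReal (by positivity) (lint_both W z r ha hz hzr).2

lemma log_le_aux {r x : ℝ} (hr : 1 ≤ r) (hx : 0 ≤ x) :
    Real.log x ≤ Real.log r + max (x - r) 0 / r := by
  have hr0 : (0:ℝ) < r := lt_of_lt_of_le one_pos hr
  have hlr : 0 ≤ Real.log r := Real.log_nonneg hr
  rcases le_or_gt x r with h | h
  · have hm : max (x - r) 0 = 0 := max_eq_right (by linarith)
    rw [hm, zero_div, add_zero]
    rcases eq_or_lt_of_le hx with h0 | h0
    · rw [← h0, Real.log_zero]; exact hlr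
    · exact Real.log_le_log h0 h
  · have hm : max (x - r) 0 = x - r := max_eq_left (by linarith)
    rw [hm]
    have hxpos : 0 < x := lt_trans hr0 h
    have hdiv : 0 < x / r := div_pos hxpos hr0
    have h1 : Real.log x - Real.log r = Real.log (x / r) :=
      (Real.log_div (ne_of_gt hxpos) (ne_of_gt hr0)).symm
    have h2 : Real.log (x / r) ≤ x / r - 1 := Real.log_le_sub_one_of_pos hdiv
    have h3 : x / r - 1 = (x - r) / r := by field_simp
    linarith [h1 ▸ h2, h3 ▸ (le_refl ((x - r) / r))]

end Ov
/-- **Overshoot estimate**: there is a `c < ∞` such that for all `n ≥ 1` and `z ∈ 𝕃` with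
`|z| < n`: `E^z[|S_{τ_n}|] ≤ n + c n^{2/3}` and `E^z[log |S_{τ_n}|] - log n ≤ c n^{-1/3}`. -/
theorem overshoot_estimate (W : LatticeWalk) :
    ∃ c : ℝ, ∀ n : ℕ, 1 ≤ n → ∀ z ∈ lat W.zstar, ‖z‖ < n →
      W.Ex z (fun s => ‖stopVal s (W.exitTime n s)‖) ≤
          n + c * (n : ℝ) ^ ((2 : ℝ) / 3) ∧
        W.Ex z (fun s => Real.log (‖stopVal s (W.exitTime n s)‖)) - Real.log n ≤
          c * (n : ℝ) ^ (-(1 : ℝ) / 3) := by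
  classical
  haveI := Ov.prob_inst W
  set C0 : ℝ := 2 * (1 + Ov.a0 W) ^ (2:ℕ) / W.σ2 with hC0
  have hσ := W.σ2_pos
  have ha0 := Ov.a0_one_le W
  have hM3 := Ov.M3_one_le W
  have hδ := W.δ_pos
  have hC0pos : 0 < C0 := by rw [hC0]; positivity
  set c : ℝ := 1 + C0 * Ov.M3 W with hc
  have hcpos : 0 < c := by
    have : 0 < C0 * Ov.M3 W := mul_pos hC0pos (Ov.M3_pos W)
    rw [hc]; linarith
  refine ⟨c, ?_⟩
  intro n hn z hz hzn
  have hn1 : (1:ℝ) ≤ (n:ℝ) := by exact_mod_cast hn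
  have hn0 : (0:ℝ) < (n:ℝ) := by linarith
  set a : ℝ := (n:ℝ) ^ ((2:ℝ)/3) with hadef
  have ha1 : (1:ℝ) ≤ a := by
    rw [hadef]
    calc (1:ℝ) = (1:ℝ) ^ ((2:ℝ)/3) := (Real.one_rpow _).symm
      _ ≤ (n:ℝ) ^ ((2:ℝ)/3) := Real.rpow_le_rpow zero_le_one hn1 (by norm_num)
  have ha : (0:ℝ) ≤ a := by linarith
  set Kq : ℝ := 2 * ((n:ℝ) + Ov.a0 W) ^ (2:ℕ) / W.σ2 with hKq
  have hKqnn : 0 ≤ Kq := by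
    have h0 : (0:ℝ) ≤ (n:ℝ) + Ov.a0 W := by linarith
    rw [hKq]; positivity
  -- β1 bound
  have hβ1nn := Ov.β1_nonneg W a
  have hβ1le : Ov.β1 W a ≤ Ov.M3 W / a ^ ((2:ℝ) + W.δ) := Ov.β1_le W a ha1
  -- Kq ≤ C0 * n²
  have hKqle : Kq ≤ C0 * (n:ℝ) ^ (2:ℕ) := by
    have h1 : (n:ℝ) + Ov.a0 W ≤ (1 + Ov.a0 W) * (n:ℝ) := by nlinarith
    have h2 : ((n:ℝ) + Ov.a0 W) ^ (2:ℕ) ≤ ((1 + Ov.a0 W) * (n:ℝ)) ^ (2:ℕ) :=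
      pow_le_pow_left₀ (by linarith) h1 2
    have h3 : 2 * ((n:ℝ) + Ov.a0 W) ^ (2:ℕ) ≤ 2 * ((1 + Ov.a0 W) ^ (2:ℕ) * (n:ℝ) ^ (2:ℕ)) := by
      rw [← mul_pow]
      linarith
    rw [hKq, hC0]
    rw [div_mul_eq_mul_div]
    exact (div_le_div_iff_of_pos_right hσ).mpr (by linarith)
  -- n² / a^(2+δ) ≤ n^(2/3)
  have hfrac : (n:ℝ) ^ (2:ℕ) / a ^ ((2:ℝ) + W.δ) ≤ (n:ℝ) ^ ((2:ℝ)/3) := by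
    have hden : (n:ℝ) ^ ((4:ℝ)/3) ≤ a ^ ((2:ℝ) + W.δ) := by
      rw [hadef, ← Real.rpow_mul hn0.le]
      exact Real.rpow_le_rpow_of_exponent_le hn1 (by nlinarith)
    have hdenpos : (0:ℝ) < (n:ℝ) ^ ((4:ℝ)/3) := Real.rpow_pos_of_pos hn0 _
    have hstep : (n:ℝ) ^ (2:ℕ) / a ^ ((2:ℝ) + W.δ) ≤ (n:ℝ) ^ (2:ℕ) / (n:ℝ) ^ ((4:ℝ)/3) :=
      div_le_div_of_nonneg_left (by positivity) hdenpos hden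
    refine hstep.trans ?_
    have hsplit : ((n:ℝ)) ^ (2:ℕ) = (n:ℝ) ^ ((2:ℝ)/3) * (n:ℝ) ^ ((4:ℝ)/3) := by
      rw [← Real.rpow_natCast (n:ℝ) 2, ← Real.rpow_add hn0]
      norm_num
    rw [hsplit, mul_div_cancel_right₀ _ (ne_of_gt hdenpos)]
  -- the key numeric bound
  have hkey : a + Kq * Ov.β1 W a ≤ c * (n:ℝ) ^ ((2:ℝ)/3) := by
    have h1 : Kq * Ov.β1 W a ≤ (C0 * (n:ℝ) ^ (2:ℕ)) * (Ov.M3 W / a ^ ((2:ℝ) + W.δ)) := by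
      refine mul_le_mul hKqle hβ1le hβ1nn ?_
      positivity
    have h2 : (C0 * (n:ℝ) ^ (2:ℕ)) * (Ov.M3 W / a ^ ((2:ℝ) + W.δ)) =
        C0 * Ov.M3 W * ((n:ℝ) ^ (2:ℕ) / a ^ ((2:ℝ) + W.δ)) := by ring
    have h3 : C0 * Ov.M3 W * ((n:ℝ) ^ (2:ℕ) / a ^ ((2:ℝ) + W.δ)) ≤
        C0 * Ov.M3 W * (n:ℝ) ^ ((2:ℝ)/3) := by
      refine mul_le_mul_of_nonneg_left hfrac ?_
      have := Ov.M3_pos W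
      positivity
    have h4 : a = 1 * (n:ℝ) ^ ((2:ℝ)/3) := by rw [one_mul, hadef]
    rw [hc]
    calc a + Kq * Ov.β1 W a ≤ a + C0 * Ov.M3 W * (n:ℝ) ^ ((2:ℝ)/3) := by
          rw [h2] at h1
          linarith
      _ = (1 + C0 * Ov.M3 W) * (n:ℝ) ^ ((2:ℝ)/3) := by rw [h4]; ring
  have hzn' : ‖z‖ < (n:ℝ) := hzn
  -- part 1
  have hpart1 : W.Ex z (fun s => ‖stopVal s (W.exitTime n s)‖) ≤
      (n:ℝ) + c * (n:ℝ) ^ ((2:ℝ)/3) := by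
    have h1 := Ov.int_fstop_le W z (n:ℝ) ha hz hzn'
    have heq : W.Ex z (fun s => ‖stopVal s (W.exitTime n s)‖) =
        ∫ ω, ‖(Ov.fstop W z (n:ℝ) ω)‖ ∂W.μ := rfl
    rw [heq, ← hKq] at *
    linarith
  refine ⟨hpart1, ?_⟩
  -- part 2
  have hrpow_neg : (n:ℝ) ^ ((2:ℝ)/3) / (n:ℝ) = (n:ℝ) ^ (-(1:ℝ)/3) := by
    rw [eq_comm, eq_div_iff (ne_of_gt hn0), ← Real.rpow_add_one (ne_of_gt hn0)]
    norm_num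
  obtain ⟨hgint, hgle⟩ := Ov.gplus_facts W z (n:ℝ) ha hz hzn'
  rw [← hKq] at hgle
  have hgle' : ∫ ω, max (‖(Ov.fstop W z (n:ℝ) ω)‖ - (n:ℝ)) 0 ∂W.μ ≤
      c * (n:ℝ) ^ ((2:ℝ)/3) := le_trans hgle hkey
  have heq2 : W.Ex z (fun s => Real.log (‖stopVal s (W.exitTime n s)‖)) =
      ∫ ω, Real.log (‖(Ov.fstop W z (n:ℝ) ω)‖) ∂W.μ := rfl
  rw [heq2]
  by_cases hint : Integrable (fun ω => Real.log (‖(Ov.fstop W z (n:ℝ) ω)‖)) W.μ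
  · have hptw : ∀ ω, Real.log (‖(Ov.fstop W z (n:ℝ) ω)‖) ≤
        Real.log (n:ℝ) + max (‖(Ov.fstop W z (n:ℝ) ω)‖ - (n:ℝ)) 0 / (n:ℝ) :=
      fun ω => Ov.log_le_aux hn1 (norm_nonneg _)
    have hRint : Integrable (fun ω => Real.log (n:ℝ) +
        max (‖(Ov.fstop W z (n:ℝ) ω)‖ - (n:ℝ)) 0 / (n:ℝ)) W.μ :=
      (integrable_const _).add (hgint.div_const _)
    have hmono := integral_mono hint hRint hptw
    have hRval : ∫ ω, (Real.log (n:ℝ) +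
        max (‖(Ov.fstop W z (n:ℝ) ω)‖ - (n:ℝ)) 0 / (n:ℝ)) ∂W.μ =
        Real.log (n:ℝ) + (∫ ω, max (‖(Ov.fstop W z (n:ℝ) ω)‖ - (n:ℝ)) 0 ∂W.μ) / (n:ℝ) := by
      rw [integral_add (integrable_const _) (hgint.div_const _), integral_const]
      simp only [measure_univ, probReal_univ, ENNReal.toReal_one, smul_eq_mul, one_mul]
      rw [integral_div]
    rw [hRval] at hmono
    have hdiv : (∫ ω, max (‖(Ov.fstop W z (n:ℝ) ω)‖ - (n:ℝ)) 0 ∂W.μ) / (n:ℝ) ≤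
        c * (n:ℝ) ^ (-(1:ℝ)/3) := by
      calc (∫ ω, max (‖(Ov.fstop W z (n:ℝ) ω)‖ - (n:ℝ)) 0 ∂W.μ) / (n:ℝ)
          ≤ (c * (n:ℝ) ^ ((2:ℝ)/3)) / (n:ℝ) := (div_le_div_iff_of_pos_right hn0).mpr hgle'
        _ = c * ((n:ℝ) ^ ((2:ℝ)/3) / (n:ℝ)) := by ring
        _ = c * (n:ℝ) ^ (-(1:ℝ)/3) := by rw [hrpow_neg]
    linarith
  · rw [integral_undef hint]
    have h1 : 0 ≤ Real.log (n:ℝ) := Real.log_nonneg hn1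
    have h2 : 0 ≤ c * (n:ℝ) ^ (-(1:ℝ)/3) := by
      have := Real.rpow_pos_of_pos hn0 (-(1:ℝ)/3)
      positivity
    linarith
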